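/- arXiv:2112.12374 — 3 statements merged into one kernel-verified Lean document; each statement's English description precedes it below -/
import Mathlib

section
/- Let d ≥ 1 and γ ∈ (-1,1). For every f ∈ C_c^∞(ℝ^d × (0,∞)): ∬_{ℝ^d×(0,∞)} ξ^γ ∂_ξ(Δ_γ f) ∂_ξ f dx dξ = -γ ∬_{ℝ^d×(0,∞)} ξ^{γ-2} |∂_ξ f|² dx dξ - ∬_{ℝ^d×(0,∞)} ξ^γ |∂_ξ ∇_{(x,ξ)} f|² dx dξ, where ∇_{(x,ξ)} is the full gradient in all d+1 variables. -/
open MeasureTheory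

set_option maxHeartbeats 2000000

noncomputable section

/-- The operator `Δ_γ f = Δ_{(x,ξ)} f + (γ/ξ) ∂_ξ f` on functions on `ℝ^d × ℝ`
(relevant on the upper half-space `ξ > 0`). -/
noncomputable def dgamma (d : ℕ) (γ : ℝ)
    (f : EuclideanSpace ℝ (Fin d) × ℝ → ℝ)
    (p : EuclideanSpace ℝ (Fin d) × ℝ) : ℝ :=
  (∑ i : Fin d,
      fderiv ℝ (fun q => fderiv ℝ f q (EuclideanSpace.single i 1, 0)) p
        (EuclideanSpace.single i 1, 0))
    + fderiv ℝ (fun q => fderiv ℝ f q (0, 1)) p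
        ((0 : EuclideanSpace ℝ (Fin d)), (1 : ℝ))
    + γ / p.2 * fderiv ℝ f p ((0 : EuclideanSpace ℝ (Fin d)), (1 : ℝ))

/-- The `d+1` coordinate directions of `ℝ^d × ℝ`. -/
noncomputable def dir (d : ℕ) (i : Fin (d + 1)) : EuclideanSpace ℝ (Fin d) × ℝ :=
  if h : (i : ℕ) < d then (EuclideanSpace.single (⟨i, h⟩ : Fin d) 1, 0)
  else ((0 : EuclideanSpace ℝ (Fin d)), (1 : ℝ))

/-- The partial derivative `∂_ξ` in the extension variable. -/
noncomputable def dxi (d : ℕ) (f : EuclideanSpace ℝ (Fin d) × ℝ → ℝ)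
    (p : EuclideanSpace ℝ (Fin d) × ℝ) : ℝ :=
  fderiv ℝ f p ((0 : EuclideanSpace ℝ (Fin d)), (1 : ℝ))

section Aux

variable {d : ℕ}

local notation "E" => EuclideanSpace ℝ (Fin d) × ℝ

instance : Measure.IsAddHaarMeasure (volume : Measure E) :=
  Measure.prod.instIsAddHaarMeasure _ _

private lemma smoothD {h : E → ℝ} (hh : ContDiff ℝ (⊤ : ℕ∞) h) (v : E) :
    ContDiff ℝ (⊤ : ℕ∞) (fun p => fderiv ℝ h p v) :=
  (hh.fderiv_right (m := (⊤ : ℕ∞)) (by simp)).clm_apply contDiff_const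

private lemma tsupportD (h : E → ℝ) (v : E) :
    tsupport (fun p => fderiv ℝ h p v) ⊆ tsupport h := by
  apply closure_minimal _ (isClosed_tsupport h)
  intro p hp
  have h0 : fderiv ℝ h p ≠ 0 := by
    intro h0
    apply hp
    simp only [Function.mem_support, ne_eq, not_not] at *
    rw [h0]; rfl
  exact support_fderiv_subset ℝ h0

private lemma fderiv_zero_of_not_mem {u : E → ℝ} {p : E} (hp : p ∉ tsupport u) :
    fderiv ℝ u p = 0 := by
  have hev : u =ᶠ[nhds p] 0 := notMem_tsupport_iff_eventuallyEq.1 hp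
  rw [hev.fderiv_eq]
  exact fderiv_const_apply 0

private lemma Dcomm {h : E → ℝ} (hh : ContDiff ℝ (⊤ : ℕ∞) h) (v w p : E) :
    fderiv ℝ (fun q => fderiv ℝ h q v) p w = fderiv ℝ (fun q => fderiv ℝ h q w) p v := by
  have hd : DifferentiableAt ℝ (fderiv ℝ h) p :=
    ((hh.fderiv_right (m := (⊤ : ℕ∞)) (by simp)).differentiable (by norm_cast)).differentiableAt
  have e1 : ∀ u : E, fderiv ℝ (fun q => fderiv ℝ h q u) p
      = (fderiv ℝ (fderiv ℝ h) p).flip u := by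
    intro u
    have := fderiv_clm_apply (c := fderiv ℝ h) (u := fun _ : E => u) hd
      (differentiableAt_const u)
    simpa using this
  have hsymm : IsSymmSndFDerivAt ℝ h p :=
    hh.contDiffAt.isSymmSndFDerivAt (by rw [minSmoothness_of_isRCLikeNormedField]; exact WithTop.coe_le_coe.2 le_top)
  rw [e1, e1]
  simpa using hsymm w v

private lemma tsupport_mul_sub (u w : E → ℝ) :
    tsupport (fun p => u p * w p) ⊆ tsupport u :=
  closure_minimal (fun _ hp => subset_closure (left_ne_zero_of_mul hp))
    (isClosed_tsupport u)

private lemma hcs_mono {u w : E → ℝ} (h : tsupport w ⊆ tsupport u)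
    (hu : HasCompactSupport u) : HasCompactSupport w :=
  IsCompact.of_isClosed_subset hu (isClosed_tsupport w) h

private lemma smooth_wmul {u : E → ℝ} (hu : ContDiff ℝ (⊤ : ℕ∞) u) {ε : ℝ} (hε : 0 < ε)
    (hsupp : tsupport u ⊆ {p : E | ε ≤ p.2}) (β : ℝ) :
    ContDiff ℝ (⊤ : ℕ∞) (fun p => p.2 ^ β * u p) := by
  rw [contDiff_iff_contDiffAt]
  intro p
  by_cases hp : p ∈ tsupport u
  · have h2 : p.2 ≠ 0 := ne_of_gt (lt_of_lt_of_le hε (hsupp hp))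
    exact (((Real.contDiffAt_rpow_const_of_ne h2).comp p
      contDiff_snd.contDiffAt)).mul hu.contDiffAt
  · have hev : u =ᶠ[nhds p] 0 := notMem_tsupport_iff_eventuallyEq.1 hp
    exact contDiffAt_const (c := 0) |>.congr_of_eventuallyEq
      (hev.mono fun q hq => by simp [hq])

private lemma fderiv_wmul {u : E → ℝ} (hu : ContDiff ℝ (⊤ : ℕ∞) u) {ε : ℝ} (hε : 0 < ε)
    (hsupp : tsupport u ⊆ {p : E | ε ≤ p.2}) (β : ℝ) (v p : E) :
    fderiv ℝ (fun q => q.2 ^ β * u q) p v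
      = β * p.2 ^ (β - 1) * v.2 * u p + p.2 ^ β * fderiv ℝ u p v := by
  by_cases hp : p ∈ tsupport u
  · have h2 : p.2 ≠ 0 := ne_of_gt (lt_of_lt_of_le hε (hsupp hp))
    have hW : HasFDerivAt (fun q : E => q.2 ^ β)
        ((β * p.2 ^ (β - 1)) • ContinuousLinearMap.snd ℝ (EuclideanSpace ℝ (Fin d)) ℝ) p :=
      (Real.hasDerivAt_rpow_const (p := β) (Or.inl h2)).comp_hasFDerivAt p hasFDerivAt_snd
    have hud : HasFDerivAt u (fderiv ℝ u p) p :=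
      ((hu.differentiable (by norm_cast)) p).hasFDerivAt
    have := (hW.mul hud).fderiv
    rw [show (fun q : E => q.2 ^ β * u q) = (fun q : E => q.2 ^ β) * u from rfl, this]
    simp only [ContinuousLinearMap.add_apply, ContinuousLinearMap.coe_smul',
      Pi.smul_apply, ContinuousLinearMap.coe_snd', smul_eq_mul]
    ring
  · have hev : u =ᶠ[nhds p] 0 := notMem_tsupport_iff_eventuallyEq.1 hp
    have hprod : (fun q : E => q.2 ^ β * u q) =ᶠ[nhds p] 0 :=
      hev.mono fun q hq => by simp [hq]
    have h1 : fderiv ℝ (fun q : E => q.2 ^ β * u q) p = 0 := by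
      rw [hprod.fderiv_eq]; exact fderiv_const_apply 0
    have h2 : u p = 0 := hev.eq_of_nhds
    have h3 : fderiv ℝ u p = 0 := by
      rw [hev.fderiv_eq]; exact fderiv_const_apply 0
    rw [h1, h2, h3]
    simp

private lemma integrable_wmul {u : E → ℝ} (hu : ContDiff ℝ (⊤ : ℕ∞) u)
    (hus : HasCompactSupport u) {ε : ℝ} (hε : 0 < ε)
    (hsupp : tsupport u ⊆ {p : E | ε ≤ p.2}) (β : ℝ) :
    Integrable (fun p => p.2 ^ β * u p) volume :=
  ((smooth_wmul hu hε hsupp β).continuous).integrable_of_hasCompactSupport hus.mul_left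

private lemma ibp {u w : E → ℝ} (hu : ContDiff ℝ (⊤ : ℕ∞) u) (hw : ContDiff ℝ (⊤ : ℕ∞) w)
    (hus : HasCompactSupport u) {ε : ℝ} (hε : 0 < ε)
    (hsupp : tsupport u ⊆ {p : E | ε ≤ p.2}) (β : ℝ) (v : E) :
    ∫ p, p.2 ^ β * (u p * fderiv ℝ w p v)
      = -(β * v.2 * ∫ p, p.2 ^ (β - 1) * (u p * w p))
        - ∫ p, p.2 ^ β * (fderiv ℝ u p v * w p) := by
  have hf₀ : ContDiff ℝ (⊤ : ℕ∞) (fun p : E => p.2 ^ β * u p) :=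
    smooth_wmul hu hε hsupp β
  have hf₀c : HasCompactSupport (fun p : E => p.2 ^ β * u p) := hus.mul_left
  have i1 : Integrable (fun p : E => (p.2 ^ β * u p) * fderiv ℝ w p v) volume :=
    (hf₀.continuous.mul (smoothD hw v).continuous).integrable_of_hasCompactSupport
      hf₀c.mul_right
  have i2 : Integrable (fun p : E => fderiv ℝ (fun q : E => q.2 ^ β * u q) p v * w p)
      volume := by
    apply ((smoothD hf₀ v).continuous.mul hw.continuous).integrable_of_hasCompactSupport
    exact (hcs_mono (tsupportD _ v) hf₀c).mul_right
  have i3 : Integrable (fun p : E => (p.2 ^ β * u p) * w p) volume :=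
    (hf₀.continuous.mul hw.continuous).integrable_of_hasCompactSupport hf₀c.mul_right
  have h := integral_mul_fderiv_eq_neg_fderiv_mul_of_integrable i2 i1 i3
    (fun x _ => hf₀.differentiable (by norm_cast) x) (fun x _ => hw.differentiable (by norm_cast) x)
  have e1 : (fun p : E => p.2 ^ β * (u p * fderiv ℝ w p v))
      = fun p : E => (p.2 ^ β * u p) * fderiv ℝ w p v := by
    funext p; ring
  rw [e1, h]
  have e2 : (fun p : E => fderiv ℝ (fun q : E => q.2 ^ β * u q) p v * w p)
      = fun p : E => (β * v.2) * (p.2 ^ (β - 1) * (u p * w p))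
          + p.2 ^ β * (fderiv ℝ u p v * w p) := by
    funext p
    rw [fderiv_wmul hu hε hsupp β v p]
    ring
  rw [e2]
  have i4 : Integrable (fun p : E => (β * v.2) * (p.2 ^ (β - 1) * (u p * w p))) volume := by
    apply Integrable.const_mul
    exact integrable_wmul (hu.mul hw) hus.mul_right hε
      ((tsupport_mul_sub u w).trans hsupp) (β - 1)
  have i5 : Integrable (fun p : E => p.2 ^ β * (fderiv ℝ u p v * w p)) volume := by
    apply integrable_wmul ((smoothD hu v).mul hw)
      ((hcs_mono (tsupportD u v) hus).mul_right) hε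
      ((tsupport_mul_sub _ w).trans ((tsupportD u v).trans hsupp)) β
  rw [integral_add i4 i5, integral_const_mul]
  ring

private lemma dir_castSucc (i : Fin d) :
    dir d i.castSucc = ((EuclideanSpace.single i 1 : EuclideanSpace ℝ (Fin d)), (0 : ℝ)) := by
  have h : ((i.castSucc : Fin (d+1)) : ℕ) < d := by simp [i.isLt]
  have h2 : (⟨((i.castSucc : Fin (d+1)) : ℕ), h⟩ : Fin d) = i := Fin.ext (by simp)
  rw [dir, dif_pos h, h2]

private lemma dir_last :
    dir d (Fin.last d) = ((0 : EuclideanSpace ℝ (Fin d)), (1 : ℝ)) := by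
  rw [dir, dif_neg]
  simp

/-- The key pointwise derivative computation for `ξ`-derivative of `Δ_γ f`, at points
with nonzero last coordinate. -/
private lemma step1 (γ : ℝ) (f : E → ℝ) (hf : ContDiff ℝ (⊤ : ℕ∞) f)
    (p : E) (hp : p.2 ≠ 0) :
    fderiv ℝ (dgamma d γ f) p ((0 : EuclideanSpace ℝ (Fin d)), (1 : ℝ))
      = (∑ i : Fin (d + 1),
          fderiv ℝ (fun q => fderiv ℝ (fun r => fderiv ℝ f r (dir d i)) q
            ((0 : EuclideanSpace ℝ (Fin d)), (1 : ℝ))) p (dir d i))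
        + (γ / p.2 * fderiv ℝ (fun q => fderiv ℝ f q
              ((0 : EuclideanSpace ℝ (Fin d)), (1 : ℝ))) p
              ((0 : EuclideanSpace ℝ (Fin d)), (1 : ℝ))
           - γ / p.2 ^ 2 * fderiv ℝ f p ((0 : EuclideanSpace ℝ (Fin d)), (1 : ℝ))) := by
  set e : E := ((0 : EuclideanSpace ℝ (Fin d)), (1 : ℝ)) with he
  set v : Fin d → E := fun i => ((EuclideanSpace.single i 1 : EuclideanSpace ℝ (Fin d)),
    (0 : ℝ)) with hv
  have hrw : dgamma d γ f = fun q =>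
      ((∑ i : Fin d, fderiv ℝ (fun r => fderiv ℝ f r (v i)) q (v i))
        + fderiv ℝ (fun r => fderiv ℝ f r e) q e)
      + γ / q.2 * fderiv ℝ f q e := rfl
  have hAdiff : ∀ i : Fin d, HasFDerivAt (fun q => fderiv ℝ (fun r => fderiv ℝ f r (v i)) q (v i))
      (fderiv ℝ (fun q => fderiv ℝ (fun r => fderiv ℝ f r (v i)) q (v i)) p) p :=
    fun i => (((smoothD (smoothD hf (v i)) (v i)).differentiable (by norm_cast)) p).hasFDerivAt
  have hBdiff : HasFDerivAt (fun q => fderiv ℝ (fun r => fderiv ℝ f r e) q e)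
      (fderiv ℝ (fun q => fderiv ℝ (fun r => fderiv ℝ f r e) q e) p) p :=
    (((smoothD (smoothD hf e) e).differentiable (by norm_cast)) p).hasFDerivAt
  -- derivative of the singular coefficient term
  have hq : HasFDerivAt (fun q : E => (q.2)⁻¹)
      ((-(p.2 ^ 2)⁻¹) • ContinuousLinearMap.snd ℝ (EuclideanSpace ℝ (Fin d)) ℝ) p :=
    (hasDerivAt_inv hp).comp_hasFDerivAt p hasFDerivAt_snd
  have hqc : HasFDerivAt (fun q : E => γ * (q.2)⁻¹)
      (γ • ((-(p.2 ^ 2)⁻¹) • ContinuousLinearMap.snd ℝ (EuclideanSpace ℝ (Fin d)) ℝ)) p :=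
    hq.const_mul γ
  have hgd : HasFDerivAt (fun q : E => fderiv ℝ f q e)
      (fderiv ℝ (fun q : E => fderiv ℝ f q e) p) p :=
    (((smoothD hf e).differentiable (by norm_cast)) p).hasFDerivAt
  have hC : HasFDerivAt (fun q : E => γ / q.2 * fderiv ℝ f q e)
      ((γ * (p.2)⁻¹) • fderiv ℝ (fun q : E => fderiv ℝ f q e) p
        + (fderiv ℝ f p e) •
          (γ • ((-(p.2 ^ 2)⁻¹) • ContinuousLinearMap.snd ℝ (EuclideanSpace ℝ (Fin d)) ℝ))) p := by
    simp only [div_eq_mul_inv]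
    exact hqc.mul hgd
  have htotal : fderiv ℝ (fun q : E =>
      ((∑ i : Fin d, fderiv ℝ (fun r => fderiv ℝ f r (v i)) q (v i))
        + fderiv ℝ (fun r => fderiv ℝ f r e) q e)
      + γ / q.2 * fderiv ℝ f q e) p
      = ((∑ i : Fin d, fderiv ℝ (fun q => fderiv ℝ (fun r => fderiv ℝ f r (v i)) q (v i)) p)
          + fderiv ℝ (fun q => fderiv ℝ (fun r => fderiv ℝ f r e) q e) p)
        + ((γ * (p.2)⁻¹) • fderiv ℝ (fun q : E => fderiv ℝ f q e) p
            + (fderiv ℝ f p e) •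
              (γ • ((-(p.2 ^ 2)⁻¹) • ContinuousLinearMap.snd ℝ (EuclideanSpace ℝ (Fin d)) ℝ))) :=
    (((HasFDerivAt.fun_sum (fun i _ => hAdiff i)).add hBdiff).add hC).fderiv
  rw [hrw, htotal]
  simp only [ContinuousLinearMap.add_apply, ContinuousLinearMap.coe_smul',
    Pi.smul_apply, ContinuousLinearMap.sum_apply, ContinuousLinearMap.coe_snd',
    smul_eq_mul]
  -- commute derivatives in the second-order terms
  have hcomm : ∀ i : Fin d,
      fderiv ℝ (fun q => fderiv ℝ (fun r => fderiv ℝ f r (v i)) q (v i)) p e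
        = fderiv ℝ (fun q => fderiv ℝ (fun r => fderiv ℝ f r (v i)) q e) p (v i) :=
    fun i => Dcomm (smoothD hf (v i)) (v i) e p
  rw [Finset.sum_congr rfl (fun i _ => hcomm i)]
  rw [Fin.sum_univ_castSucc]
  simp only [dir_castSucc, dir_last]
  simp only [hv, he]
  norm_num
  field_simp
  ring

private lemma sum_dir_snd (c : ℝ) (J Q : Fin (d + 1) → ℝ) :
    ∑ i : Fin (d + 1), (-(c * (dir d i).2 * J i) - Q i)
      = -(c * J (Fin.last d)) - ∑ i : Fin (d + 1), Q i := by
  rw [Fin.sum_univ_castSucc (f := fun i => -(c * (dir d i).2 * J i) - Q i),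
      Fin.sum_univ_castSucc (f := Q)]
  simp [dir_castSucc, dir_last]
  ring


/-- For `γ ∈ (-1,1)` and `f ∈ C_c^∞(ℝ^d × (0,∞))`,
`∬ ξ^γ ∂_ξ(Δ_γ f) ∂_ξ f = -γ ∬ ξ^{γ-2} |∂_ξ f|² - ∬ ξ^γ |∂_ξ ∇_{(x,ξ)} f|²`. -/
theorem stmt_9 (d : ℕ) (hd : 1 ≤ d) (γ : ℝ) (hγ₁ : -1 < γ) (hγ₂ : γ < 1)
    (f : EuclideanSpace ℝ (Fin d) × ℝ → ℝ)
    (hf : ContDiff ℝ (⊤ : ℕ∞) f) (hfs : HasCompactSupport f)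
    (hfhs : tsupport f ⊆ {p : EuclideanSpace ℝ (Fin d) × ℝ | 0 < p.2}) :
    ∫ p in {p : EuclideanSpace ℝ (Fin d) × ℝ | 0 < p.2},
        p.2 ^ γ * dxi d (dgamma d γ f) p * dxi d f p
      = -γ * (∫ p in {p : EuclideanSpace ℝ (Fin d) × ℝ | 0 < p.2},
            p.2 ^ (γ - 2) * (dxi d f p) ^ 2)
        - ∫ p in {p : EuclideanSpace ℝ (Fin d) × ℝ | 0 < p.2},
            p.2 ^ γ * ∑ i : Fin (d + 1),
              (dxi d (fun q => fderiv ℝ f q (dir d i)) p) ^ 2 := by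
  classical
  obtain ⟨ε, hε, hKε⟩ : ∃ ε, 0 < ε ∧
      tsupport f ⊆ {p : EuclideanSpace ℝ (Fin d) × ℝ | ε ≤ p.2} := by
    rcases (tsupport f).eq_empty_or_nonempty with h | h
    · exact ⟨1, one_pos, by simp [h]⟩
    · obtain ⟨p₀, hp₀K, hmin⟩ :=
        IsCompact.exists_isMinOn hfs h (continuous_snd.continuousOn)
      exact ⟨p₀.2, hfhs hp₀K, fun p hp => isMinOn_iff.1 hmin p hp⟩
  have hnotK : ∀ p : EuclideanSpace ℝ (Fin d) × ℝ, p.2 ≤ 0 → p ∉ tsupport f :=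
    fun p h hm => absurd (hKε hm) (not_le.2 (h.trans_lt hε))
  have hg : ContDiff ℝ (⊤ : ℕ∞) (fun p : EuclideanSpace ℝ (Fin d) × ℝ => fderiv ℝ f p ((0 : EuclideanSpace ℝ (Fin d)), (1 : ℝ))) :=
    smoothD hf _
  have hgsupp : tsupport (fun p : EuclideanSpace ℝ (Fin d) × ℝ => fderiv ℝ f p ((0 : EuclideanSpace ℝ (Fin d)), (1 : ℝ)))
      ⊆ {p : EuclideanSpace ℝ (Fin d) × ℝ | ε ≤ p.2} := (tsupportD f _).trans hKε
  have hgcpt : HasCompactSupport (fun p : EuclideanSpace ℝ (Fin d) × ℝ => fderiv ℝ f p ((0 : EuclideanSpace ℝ (Fin d)), (1 : ℝ))) :=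
    hcs_mono (tsupportD f _) hfs
  have hK : ∀ i : Fin (d + 1), ContDiff ℝ (⊤ : ℕ∞)
      (fun p : EuclideanSpace ℝ (Fin d) × ℝ =>
        fderiv ℝ (fun q => fderiv ℝ f q (dir d i)) p ((0 : EuclideanSpace ℝ (Fin d)), (1 : ℝ))) :=
    fun i => smoothD (smoothD hf _) _
  have hg0 : ∀ p : EuclideanSpace ℝ (Fin d) × ℝ, p ∉ tsupport f → fderiv ℝ f p ((0 : EuclideanSpace ℝ (Fin d)), (1 : ℝ)) = 0 :=
    fun p hp => by rw [fderiv_zero_of_not_mem hp]; simp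
  have hK0 : ∀ (i : Fin (d + 1)) (p : EuclideanSpace ℝ (Fin d) × ℝ), p ∉ tsupport f →
      fderiv ℝ (fun q => fderiv ℝ f q (dir d i)) p ((0 : EuclideanSpace ℝ (Fin d)), (1 : ℝ)) = 0 :=
    fun i p hp => by
      rw [fderiv_zero_of_not_mem (fun hm => hp (tsupportD f (dir d i) hm))]; simp
  -- convert set integrals to integrals over the whole space
  simp only [dxi]
  rw [setIntegral_eq_integral_of_forall_compl_eq_zero (f := fun p =>
      p.2 ^ γ * fderiv ℝ (dgamma d γ f) p ((0 : EuclideanSpace ℝ (Fin d)), (1 : ℝ)) * fderiv ℝ f p ((0 : EuclideanSpace ℝ (Fin d)), (1 : ℝ))) (fun p hp => by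
    beta_reduce
    rw [hg0 p (hnotK p (le_of_not_gt hp)), mul_zero])]
  rw [setIntegral_eq_integral_of_forall_compl_eq_zero (f := fun p =>
      p.2 ^ (γ - 2) * (fderiv ℝ f p ((0 : EuclideanSpace ℝ (Fin d)), (1 : ℝ))) ^ 2) (fun p hp => by
    beta_reduce
    rw [hg0 p (hnotK p (le_of_not_gt hp))]; ring)]
  rw [setIntegral_eq_integral_of_forall_compl_eq_zero (f := fun p =>
      p.2 ^ γ * ∑ i : Fin (d + 1),
        (fderiv ℝ (fun q => fderiv ℝ f q (dir d i)) p ((0 : EuclideanSpace ℝ (Fin d)), (1 : ℝ))) ^ 2) (fun p hp => by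
    beta_reduce
    rw [Finset.sum_eq_zero (fun i _ => by
      rw [hK0 i p (hnotK p (le_of_not_gt hp))]; ring), mul_zero])]
  -- the pointwise identity for the left-hand side integrand
  have hL1 : (fun p : EuclideanSpace ℝ (Fin d) × ℝ =>
        p.2 ^ γ * fderiv ℝ (dgamma d γ f) p ((0 : EuclideanSpace ℝ (Fin d)), (1 : ℝ)) * fderiv ℝ f p ((0 : EuclideanSpace ℝ (Fin d)), (1 : ℝ)))
      = fun p : EuclideanSpace ℝ (Fin d) × ℝ =>
        (∑ i : Fin (d + 1), p.2 ^ γ * (fderiv ℝ f p ((0 : EuclideanSpace ℝ (Fin d)), (1 : ℝ)) *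
          fderiv ℝ (fun q => fderiv ℝ (fun r => fderiv ℝ f r (dir d i)) q ((0 : EuclideanSpace ℝ (Fin d)), (1 : ℝ))) p (dir d i)))
        + (γ * (p.2 ^ (γ - 1) * (fderiv ℝ f p ((0 : EuclideanSpace ℝ (Fin d)), (1 : ℝ)) *
              fderiv ℝ (fun q => fderiv ℝ f q ((0 : EuclideanSpace ℝ (Fin d)), (1 : ℝ))) p ((0 : EuclideanSpace ℝ (Fin d)), (1 : ℝ))))
           - γ * (p.2 ^ (γ - 2) * (fderiv ℝ f p ((0 : EuclideanSpace ℝ (Fin d)), (1 : ℝ)) * fderiv ℝ f p ((0 : EuclideanSpace ℝ (Fin d)), (1 : ℝ))))) := by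
    funext p
    by_cases hp : 0 < p.2
    · rw [step1 γ f hf p (ne_of_gt hp)]
      have e1 : p.2 ^ (γ - 1) = p.2 ^ γ / p.2 := by
        rw [Real.rpow_sub hp, Real.rpow_one]
      have e2 : p.2 ^ (γ - 2) = p.2 ^ γ / p.2 ^ 2 := by
        rw [Real.rpow_sub hp, show (2 : ℝ) = ((2 : ℕ) : ℝ) by norm_num,
          Real.rpow_natCast]
      rw [e1, e2, ← Finset.mul_sum, ← Finset.mul_sum]
      have hne : p.2 ≠ 0 := ne_of_gt hp
      field_simp
    · rw [hg0 p (hnotK p (le_of_not_gt hp))]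
      simp
  rw [hL1]
  -- integrability facts
  have hIA : ∀ i : Fin (d + 1), Integrable (fun p : EuclideanSpace ℝ (Fin d) × ℝ =>
      p.2 ^ γ * (fderiv ℝ f p ((0 : EuclideanSpace ℝ (Fin d)), (1 : ℝ)) *
        fderiv ℝ (fun q => fderiv ℝ (fun r => fderiv ℝ f r (dir d i)) q ((0 : EuclideanSpace ℝ (Fin d)), (1 : ℝ))) p (dir d i)))
      volume := fun i =>
    integrable_wmul (hg.mul (smoothD (hK i) (dir d i))) hgcpt.mul_right hε
      ((tsupport_mul_sub _ _).trans hgsupp) γ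
  have hIB : Integrable (fun p : EuclideanSpace ℝ (Fin d) × ℝ =>
      p.2 ^ (γ - 1) * (fderiv ℝ f p ((0 : EuclideanSpace ℝ (Fin d)), (1 : ℝ)) * fderiv ℝ (fun q => fderiv ℝ f q ((0 : EuclideanSpace ℝ (Fin d)), (1 : ℝ))) p ((0 : EuclideanSpace ℝ (Fin d)), (1 : ℝ))))
      volume :=
    integrable_wmul (hg.mul (smoothD hg ((0 : EuclideanSpace ℝ (Fin d)), (1 : ℝ)))) hgcpt.mul_right hε
      ((tsupport_mul_sub _ _).trans hgsupp) (γ - 1)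
  have hIC : Integrable (fun p : EuclideanSpace ℝ (Fin d) × ℝ =>
      p.2 ^ (γ - 2) * (fderiv ℝ f p ((0 : EuclideanSpace ℝ (Fin d)), (1 : ℝ)) * fderiv ℝ f p ((0 : EuclideanSpace ℝ (Fin d)), (1 : ℝ)))) volume :=
    integrable_wmul (hg.mul hg) hgcpt.mul_right hε
      ((tsupport_mul_sub _ _).trans hgsupp) (γ - 2)
  have hKsupp : ∀ i : Fin (d + 1), tsupport (fun p : EuclideanSpace ℝ (Fin d) × ℝ =>
      fderiv ℝ (fun q => fderiv ℝ f q (dir d i)) p ((0 : EuclideanSpace ℝ (Fin d)), (1 : ℝ)))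
      ⊆ {p : EuclideanSpace ℝ (Fin d) × ℝ | ε ≤ p.2} :=
    fun i => ((tsupportD _ _).trans (tsupportD f _)).trans hKε
  have hKcpt : ∀ i : Fin (d + 1), HasCompactSupport
      (fun p : EuclideanSpace ℝ (Fin d) × ℝ =>
        fderiv ℝ (fun q => fderiv ℝ f q (dir d i)) p ((0 : EuclideanSpace ℝ (Fin d)), (1 : ℝ))) :=
    fun i => hcs_mono ((tsupportD _ _).trans (tsupportD f _)) hfs
  have hIQ : ∀ i : Fin (d + 1), Integrable (fun p : EuclideanSpace ℝ (Fin d) × ℝ =>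
      p.2 ^ γ * (fderiv ℝ (fun q => fderiv ℝ f q (dir d i)) p ((0 : EuclideanSpace ℝ (Fin d)), (1 : ℝ)) *
        fderiv ℝ (fun q => fderiv ℝ f q (dir d i)) p ((0 : EuclideanSpace ℝ (Fin d)), (1 : ℝ)))) volume := fun i =>
    integrable_wmul ((hK i).mul (hK i)) (hKcpt i).mul_right hε
      ((tsupport_mul_sub _ _).trans (hKsupp i)) γ
  -- split the integral
  have hIB' : Integrable (fun p : EuclideanSpace ℝ (Fin d) × ℝ =>
      γ * (p.2 ^ (γ - 1) * (fderiv ℝ f p ((0 : EuclideanSpace ℝ (Fin d)), (1 : ℝ)) * fderiv ℝ (fun q => fderiv ℝ f q ((0 : EuclideanSpace ℝ (Fin d)), (1 : ℝ))) p ((0 : EuclideanSpace ℝ (Fin d)), (1 : ℝ))))) volume := hIB.const_mul γ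
  have hIC' : Integrable (fun p : EuclideanSpace ℝ (Fin d) × ℝ =>
      γ * (p.2 ^ (γ - 2) * (fderiv ℝ f p ((0 : EuclideanSpace ℝ (Fin d)), (1 : ℝ)) * fderiv ℝ f p ((0 : EuclideanSpace ℝ (Fin d)), (1 : ℝ))))) volume := hIC.const_mul γ
  have hIBC : Integrable (fun p : EuclideanSpace ℝ (Fin d) × ℝ =>
      γ * (p.2 ^ (γ - 1) * (fderiv ℝ f p ((0 : EuclideanSpace ℝ (Fin d)), (1 : ℝ)) * fderiv ℝ (fun q => fderiv ℝ f q ((0 : EuclideanSpace ℝ (Fin d)), (1 : ℝ))) p ((0 : EuclideanSpace ℝ (Fin d)), (1 : ℝ)))) - γ * (p.2 ^ (γ - 2) * (fderiv ℝ f p ((0 : EuclideanSpace ℝ (Fin d)), (1 : ℝ)) * fderiv ℝ f p ((0 : EuclideanSpace ℝ (Fin d)), (1 : ℝ))))) volume := hIB'.sub hIC'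
  rw [integral_add (integrable_finset_sum Finset.univ (fun i _ => hIA i)) hIBC]
  rw [integral_finset_sum Finset.univ (fun i _ => hIA i)]
  rw [integral_sub hIB' hIC', integral_const_mul, integral_const_mul]
  -- integrate by parts in each direction
  have hIBP : ∀ i : Fin (d + 1),
      (∫ p : EuclideanSpace ℝ (Fin d) × ℝ, p.2 ^ γ * (fderiv ℝ f p ((0 : EuclideanSpace ℝ (Fin d)), (1 : ℝ)) *
        fderiv ℝ (fun q => fderiv ℝ (fun r => fderiv ℝ f r (dir d i)) q ((0 : EuclideanSpace ℝ (Fin d)), (1 : ℝ))) p (dir d i)))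
      = -(γ * (dir d i).2 * ∫ p : EuclideanSpace ℝ (Fin d) × ℝ,
            p.2 ^ (γ - 1) * (fderiv ℝ f p ((0 : EuclideanSpace ℝ (Fin d)), (1 : ℝ)) *
              fderiv ℝ (fun q => fderiv ℝ f q (dir d i)) p ((0 : EuclideanSpace ℝ (Fin d)), (1 : ℝ))))
        - ∫ p : EuclideanSpace ℝ (Fin d) × ℝ,
            p.2 ^ γ * (fderiv ℝ (fun q => fderiv ℝ f q (dir d i)) p ((0 : EuclideanSpace ℝ (Fin d)), (1 : ℝ)) *
              fderiv ℝ (fun q => fderiv ℝ f q (dir d i)) p ((0 : EuclideanSpace ℝ (Fin d)), (1 : ℝ))) := by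
    intro i
    have h := ibp hg (hK i) hgcpt hε hgsupp γ (dir d i)
    rw [h]
    have hrw : (fun p : EuclideanSpace ℝ (Fin d) × ℝ =>
        p.2 ^ γ * (fderiv ℝ (fun q => fderiv ℝ f q ((0 : EuclideanSpace ℝ (Fin d)), (1 : ℝ))) p (dir d i) *
          fderiv ℝ (fun q => fderiv ℝ f q (dir d i)) p ((0 : EuclideanSpace ℝ (Fin d)), (1 : ℝ))))
        = fun p : EuclideanSpace ℝ (Fin d) × ℝ =>
          p.2 ^ γ * (fderiv ℝ (fun q => fderiv ℝ f q (dir d i)) p ((0 : EuclideanSpace ℝ (Fin d)), (1 : ℝ)) *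
            fderiv ℝ (fun q => fderiv ℝ f q (dir d i)) p ((0 : EuclideanSpace ℝ (Fin d)), (1 : ℝ))) := by
      funext p
      rw [Dcomm hf ((0 : EuclideanSpace ℝ (Fin d)), (1 : ℝ)) (dir d i) p]
    rw [hrw]
  rw [Finset.sum_congr rfl (fun i _ => hIBP i)]
  rw [sum_dir_snd γ]
  have hlast : (∫ p : EuclideanSpace ℝ (Fin d) × ℝ,
        p.2 ^ (γ - 1) * (fderiv ℝ f p ((0 : EuclideanSpace ℝ (Fin d)), (1 : ℝ)) *
          fderiv ℝ (fun q => fderiv ℝ f q (dir d (Fin.last d))) p ((0 : EuclideanSpace ℝ (Fin d)), (1 : ℝ))))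
      = ∫ p : EuclideanSpace ℝ (Fin d) × ℝ,
        p.2 ^ (γ - 1) * (fderiv ℝ f p ((0 : EuclideanSpace ℝ (Fin d)), (1 : ℝ)) * fderiv ℝ (fun q => fderiv ℝ f q ((0 : EuclideanSpace ℝ (Fin d)), (1 : ℝ))) p ((0 : EuclideanSpace ℝ (Fin d)), (1 : ℝ))) := by
    rw [dir_last]
  rw [hlast]
  -- rewrite the right-hand side
  have hR1 : (fun p : EuclideanSpace ℝ (Fin d) × ℝ =>
        p.2 ^ (γ - 2) * (fderiv ℝ f p ((0 : EuclideanSpace ℝ (Fin d)), (1 : ℝ))) ^ 2)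
      = fun p : EuclideanSpace ℝ (Fin d) × ℝ =>
        p.2 ^ (γ - 2) * (fderiv ℝ f p ((0 : EuclideanSpace ℝ (Fin d)), (1 : ℝ)) * fderiv ℝ f p ((0 : EuclideanSpace ℝ (Fin d)), (1 : ℝ))) := by
    funext p; ring
  have hR2 : (fun p : EuclideanSpace ℝ (Fin d) × ℝ =>
        p.2 ^ γ * ∑ i : Fin (d + 1),
          (fderiv ℝ (fun q => fderiv ℝ f q (dir d i)) p ((0 : EuclideanSpace ℝ (Fin d)), (1 : ℝ))) ^ 2)
      = fun p : EuclideanSpace ℝ (Fin d) × ℝ =>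
        ∑ i : Fin (d + 1), p.2 ^ γ *
          (fderiv ℝ (fun q => fderiv ℝ f q (dir d i)) p ((0 : EuclideanSpace ℝ (Fin d)), (1 : ℝ)) *
            fderiv ℝ (fun q => fderiv ℝ f q (dir d i)) p ((0 : EuclideanSpace ℝ (Fin d)), (1 : ℝ))) := by
    funext p
    rw [Finset.mul_sum]
    exact Finset.sum_congr rfl (fun i _ => by ring)
  rw [hR1, hR2, integral_finset_sum Finset.univ (fun i _ => hIQ i)]
  ring

end Aux
end
end

section
/- Let d ≥ 1, γ ∈ ℝ, and m ∈ ℕ. For every v ∈ C^∞(ℝ^d;ℝ^d) and every f ∈ C^∞(ℝ^d × (0,∞)), the following identity holds pointwise on ℝ^d × (0,∞): Δ_γ^m ( v·∇_x f ) = ∑_{ℓ₁+ℓ₂+p=m} (m!/(ℓ₁! ℓ₂! p!)) 2^p ∑_{j₁,…,j_p=1}^d ( Δ_x^{ℓ₁} ∂_{x_{j₁}}⋯∂_{x_{j_p}} v ) · ∇_x ( ∂_{x_{j₁}}⋯∂_{x_{j_p}} Δ_γ^{ℓ₂} f ), where the outer sum runs over all triples of nonnegative integers (ℓ₁,ℓ₂,p)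 with ℓ₁+ℓ₂+p = m, Δ_x is the Laplacian in the x-variables, ∇_x is the gradient in the x-variables, and · is the inner product of ℝ^d (for p = 0 the inner sum is the single term (Δ_x^{ℓ₁} v)·∇_x(Δ_γ^{ℓ₂} f)). -/
open MeasureTheory

noncomputable section

open Filter Topology

variable {X Y : Type*} [NormedAddCommGroup X] [NormedSpace ℝ X]
  [NormedAddCommGroup Y] [NormedSpace ℝ Y]

/-- Directional derivative. -/
noncomputable def Dv (w : X) (g : X → Y) : X → Y := fun x => fderiv ℝ g x w

variable {s : Set X} {g h : X → Y} {w w' : X} {x : X}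

lemma contDiffOn_Dv (hs : IsOpen s) (hg : ContDiffOn ℝ (⊤ : ℕ∞) g s) :
    ContDiffOn ℝ (⊤ : ℕ∞) (Dv w g) s := by
  have h1 : ContDiffOn ℝ (⊤ : ℕ∞) (fderiv ℝ g) s := hg.fderiv_of_isOpen hs (by exact_mod_cast le_top)
  exact (ContinuousLinearMap.apply ℝ Y w).contDiff.comp_contDiffOn h1

lemma diffAt_of_contDiffOn (hs : IsOpen s) (hg : ContDiffOn ℝ (⊤ : ℕ∞) g s) (hx : x ∈ s) :
    DifferentiableAt ℝ g x :=
  ((hg.differentiableOn (by simp)) x hx).differentiableAt (hs.mem_nhds hx)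

lemma Dv_congr_nhds (hgh : g =ᶠ[𝓝 x] h) : Dv w g x = Dv w h x := by
  simp only [Dv, hgh.fderiv_eq]

lemma Dv_congr_on (hs : IsOpen s) (hgh : ∀ y ∈ s, g y = h y) (hx : x ∈ s) :
    Dv w g x = Dv w h x :=
  Dv_congr_nhds (eventually_of_mem (hs.mem_nhds hx) hgh)

lemma Dv_Dv_eq_snd (hs : IsOpen s) (hg : ContDiffOn ℝ (⊤ : ℕ∞) g s) (hx : x ∈ s) :
    Dv w (Dv w' g) x = fderiv ℝ (fderiv ℝ g) x w w' := by
  have hdiff : DifferentiableAt ℝ (fderiv ℝ g) x :=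
    diffAt_of_contDiffOn hs (hg.fderiv_of_isOpen hs (by exact_mod_cast le_top)) hx
  have : Dv w' g = (ContinuousLinearMap.apply ℝ Y w') ∘ (fderiv ℝ g) := rfl
  rw [Dv, this, fderiv_comp x (ContinuousLinearMap.apply ℝ Y w').differentiableAt hdiff]
  simp

lemma schwarz (hs : IsOpen s) (hg : ContDiffOn ℝ (⊤ : ℕ∞) g s) (hx : x ∈ s) :
    Dv w (Dv w' g) x = Dv w' (Dv w g) x := by
  rw [Dv_Dv_eq_snd hs hg hx, Dv_Dv_eq_snd hs hg hx]
  have hat : ContDiffAt ℝ (⊤ : ℕ∞) g x := hg.contDiffAt (hs.mem_nhds hx)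
  exact (hat.isSymmSndFDerivAt (by rw [minSmoothness_of_isRCLikeNormedField]; exact (WithTop.coe_le_coe.mpr le_top : ((2:ℕ∞):WithTop ℕ∞) ≤ _))) w w'

lemma Dv_add (hg : DifferentiableAt ℝ g x) (hh : DifferentiableAt ℝ h x) :
    Dv w (fun y => g y + h y) x = Dv w g x + Dv w h x := by
  simp [Dv, fderiv_fun_add hg hh]

lemma Dv_sum {ι : Type*} (t : Finset ι) (F : ι → X → Y)
    (hF : ∀ i ∈ t, DifferentiableAt ℝ (F i) x) :
    Dv w (fun y => ∑ i ∈ t, F i y) x = ∑ i ∈ t, Dv w (F i) x := by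
  simp only [Dv]
  rw [fderiv_fun_sum hF]
  simp

lemma Dv_const_smul (c : ℝ) (hg : DifferentiableAt ℝ g x) :
    Dv w (fun y => c • g y) x = c • Dv w g x := by
  simp [Dv, fderiv_fun_const_smul hg]

lemma Dv_mul {a b : X → ℝ} (ha : DifferentiableAt ℝ a x) (hb : DifferentiableAt ℝ b x) :
    Dv w (fun y => a y * b y) x = Dv w a x * b x + a x * Dv w b x := by
  simp [Dv, fderiv_fun_mul ha hb]; ring

/-- The partial derivative `∂_{x_i}` of a function on `ℝ^d × ℝ`. -/
noncomputable def dX (d : ℕ) (i : Fin d) (g : EuclideanSpace ℝ (Fin d) × ℝ → ℝ)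
    (p : EuclideanSpace ℝ (Fin d) × ℝ) : ℝ :=
  fderiv ℝ g p (EuclideanSpace.single i 1, 0)

/-- Iterated `x`-partial derivatives `∂_{x_{j₁}} ⋯ ∂_{x_{j_p}} g` of a function on
`ℝ^d × ℝ` along a tuple of coordinate indices. -/
noncomputable def dXIter (d : ℕ) {p : ℕ} (js : Fin p → Fin d)
    (g : EuclideanSpace ℝ (Fin d) × ℝ → ℝ) : EuclideanSpace ℝ (Fin d) × ℝ → ℝ :=
  (List.ofFn js).foldr (fun i h => dX d i h) g

/-- The partial derivative `∂_{x_i}` of a vector field `v : ℝ^d → ℝ^d`. -/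
noncomputable def dXv (d : ℕ) (i : Fin d)
    (v : EuclideanSpace ℝ (Fin d) → EuclideanSpace ℝ (Fin d)) :
    EuclideanSpace ℝ (Fin d) → EuclideanSpace ℝ (Fin d) :=
  fun x => fderiv ℝ v x (EuclideanSpace.single i 1)

/-- Iterated `x`-partial derivatives of a vector field along a tuple of indices. -/
noncomputable def dXvIter (d : ℕ) {p : ℕ} (js : Fin p → Fin d)
    (v : EuclideanSpace ℝ (Fin d) → EuclideanSpace ℝ (Fin d)) :
    EuclideanSpace ℝ (Fin d) → EuclideanSpace ℝ (Fin d) :=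
  (List.ofFn js).foldr (fun i w => dXv d i w) v

/-- The componentwise Laplacian `Δ_x v` of a vector field, as an operator on vector
fields (so that `Δ_x^{ℓ}` makes sense as an iterate). -/
noncomputable def vecLapX (d : ℕ)
    (v : EuclideanSpace ℝ (Fin d) → EuclideanSpace ℝ (Fin d)) :
    EuclideanSpace ℝ (Fin d) → EuclideanSpace ℝ (Fin d) :=
  fun x => ∑ i : Fin d, dXv d i (dXv d i v) x

----------------------------------------------------------------
-- Specialization to the half-space

variable {d : ℕ}

/-- coordinate direction in `ℝ^d × ℝ` -/
def ec (d : ℕ) (i : Fin d) : EuclideanSpace ℝ (Fin d) × ℝ := (EuclideanSpace.single i 1, 0)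

/-- vertical direction -/
def xi (d : ℕ) : EuclideanSpace ℝ (Fin d) × ℝ := (0, 1)

/-- upper half space -/
def UH (d : ℕ) : Set (EuclideanSpace ℝ (Fin d) × ℝ) := {p | 0 < p.2}

lemma isOpen_UH : IsOpen (UH d) := isOpen_lt continuous_const continuous_snd

lemma dX_eq (i : Fin d) (g : EuclideanSpace ℝ (Fin d) × ℝ → ℝ) :
    dX d i g = Dv (ec d i) g := rfl

lemma dgamma_eq (γ : ℝ) (f : EuclideanSpace ℝ (Fin d) × ℝ → ℝ)
    (p : EuclideanSpace ℝ (Fin d) × ℝ) :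
    dgamma d γ f p = (∑ i : Fin d, Dv (ec d i) (Dv (ec d i) f) p)
      + Dv (xi d) (Dv (xi d) f) p + γ / p.2 * Dv (xi d) f p := rfl

lemma dXv_eq (i : Fin d) (v : EuclideanSpace ℝ (Fin d) → EuclideanSpace ℝ (Fin d)) :
    dXv d i v = Dv (EuclideanSpace.single i 1) v := rfl

----------------------------------------------------------------
-- Smoothness lemmas

lemma contDiffOn_gammaInv (γ : ℝ) :
    ContDiffOn ℝ (⊤ : ℕ∞) (fun p : EuclideanSpace ℝ (Fin d) × ℝ => γ / p.2) (UH d) :=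
  contDiffOn_const.div contDiff_snd.contDiffOn (fun _ hx => ne_of_gt hx)

lemma contDiffOn_dX (i : Fin d) {g : EuclideanSpace ℝ (Fin d) × ℝ → ℝ}
    (hg : ContDiffOn ℝ (⊤ : ℕ∞) g (UH d)) :
    ContDiffOn ℝ (⊤ : ℕ∞) (dX d i g) (UH d) := by
  rw [dX_eq]; exact contDiffOn_Dv isOpen_UH hg

lemma contDiffOn_dgamma (γ : ℝ) {g : EuclideanSpace ℝ (Fin d) × ℝ → ℝ}
    (hg : ContDiffOn ℝ (⊤ : ℕ∞) g (UH d)) :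
    ContDiffOn ℝ (⊤ : ℕ∞) (dgamma d γ g) (UH d) := by
  have h1 : ∀ w : EuclideanSpace ℝ (Fin d) × ℝ,
      ContDiffOn ℝ (⊤ : ℕ∞) (Dv w g) (UH d) := fun w => contDiffOn_Dv isOpen_UH hg
  have h2 : ∀ w w' : EuclideanSpace ℝ (Fin d) × ℝ,
      ContDiffOn ℝ (⊤ : ℕ∞) (Dv w (Dv w' g)) (UH d) :=
    fun w w' => contDiffOn_Dv isOpen_UH (h1 w')
  have : dgamma d γ g = fun p =>
      (∑ i : Fin d, Dv (ec d i) (Dv (ec d i) g) p)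
        + Dv (xi d) (Dv (xi d) g) p + (γ / p.2) * Dv (xi d) g p := rfl
  rw [this]
  apply ContDiffOn.add
  apply ContDiffOn.add
  · exact ContDiffOn.sum (fun i _ => h2 (ec d i) (ec d i))
  · exact h2 (xi d) (xi d)
  · exact (contDiffOn_gammaInv γ).mul (h1 (xi d))

lemma contDiffOn_dgamma_iter (γ : ℝ) (l : ℕ) {g : EuclideanSpace ℝ (Fin d) × ℝ → ℝ}
    (hg : ContDiffOn ℝ (⊤ : ℕ∞) g (UH d)) :
    ContDiffOn ℝ (⊤ : ℕ∞) ((dgamma d γ)^[l] g) (UH d) := by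
  induction l generalizing g with
  | zero => exact hg
  | succ n ih => rw [Function.iterate_succ_apply]; exact ih (contDiffOn_dgamma γ hg)

lemma contDiffOn_dXIter {p : ℕ} (js : Fin p → Fin d) {g : EuclideanSpace ℝ (Fin d) × ℝ → ℝ}
    (hg : ContDiffOn ℝ (⊤ : ℕ∞) g (UH d)) :
    ContDiffOn ℝ (⊤ : ℕ∞) (dXIter d js g) (UH d) := by
  unfold dXIter
  generalize (List.ofFn js) = L
  induction L with
  | nil => exact hg
  | cons a L ih => exact contDiffOn_dX a ih

lemma contDiff_dXv (i : Fin d) {v : EuclideanSpace ℝ (Fin d) → EuclideanSpace ℝ (Fin d)}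
    (hv : ContDiff ℝ (⊤ : ℕ∞) v) : ContDiff ℝ (⊤ : ℕ∞) (dXv d i v) := by
  rw [dXv_eq]
  exact (ContinuousLinearMap.apply ℝ (EuclideanSpace ℝ (Fin d))
      (EuclideanSpace.single i 1)).contDiff.comp
    (hv.fderiv_right (m := (⊤:ℕ∞)) (by exact_mod_cast (le_refl (⊤ + 1 : ℕ∞)))) 

lemma contDiff_vecLapX {v : EuclideanSpace ℝ (Fin d) → EuclideanSpace ℝ (Fin d)}
    (hv : ContDiff ℝ (⊤ : ℕ∞) v) : ContDiff ℝ (⊤ : ℕ∞) (vecLapX d v) := by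
  unfold vecLapX
  exact ContDiff.sum (fun i _ => contDiff_dXv i (contDiff_dXv i hv))

lemma contDiff_vecLapX_iter (l : ℕ) {v : EuclideanSpace ℝ (Fin d) → EuclideanSpace ℝ (Fin d)}
    (hv : ContDiff ℝ (⊤ : ℕ∞) v) : ContDiff ℝ (⊤ : ℕ∞) ((vecLapX d)^[l] v) := by
  induction l generalizing v with
  | zero => exact hv
  | succ n ih => rw [Function.iterate_succ_apply]; exact ih (contDiff_vecLapX hv)

lemma contDiff_dXvIter {p : ℕ} (js : Fin p → Fin d)
    {v : EuclideanSpace ℝ (Fin d) → EuclideanSpace ℝ (Fin d)}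
    (hv : ContDiff ℝ (⊤ : ℕ∞) v) : ContDiff ℝ (⊤ : ℕ∞) (dXvIter d js v) := by
  unfold dXvIter
  generalize (List.ofFn js) = L
  induction L with
  | nil => exact hv
  | cons a L ih => exact contDiff_dXv a ih

lemma contDiff_coord {v : EuclideanSpace ℝ (Fin d) → EuclideanSpace ℝ (Fin d)}
    (hv : ContDiff ℝ (⊤ : ℕ∞) v) (k : Fin d) :
    ContDiff ℝ (⊤ : ℕ∞) (fun x => v x k) :=
  (EuclideanSpace.proj (𝕜 := ℝ) k).contDiff.comp hv

----------------------------------------------------------------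
-- computation helpers

@[simp] lemma ec_fst (i : Fin d) : (ec d i).1 = EuclideanSpace.single i 1 := rfl
@[simp] lemma ec_snd (i : Fin d) : (ec d i).2 = 0 := rfl
@[simp] lemma xi_fst : (xi d).1 = 0 := rfl
@[simp] lemma xi_snd : (xi d).2 = 1 := rfl

lemma Dv_fst_comp {Y : Type*} [NormedAddCommGroup Y] [NormedSpace ℝ Y]
    {b : EuclideanSpace ℝ (Fin d) → Y} {q w : EuclideanSpace ℝ (Fin d) × ℝ}
    (hb : DifferentiableAt ℝ b q.1) :
    Dv w (fun r => b r.1) q = fderiv ℝ b q.1 w.1 := by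
  have : (fun r : EuclideanSpace ℝ (Fin d) × ℝ => b r.1) = b ∘ Prod.fst := rfl
  rw [Dv, this, fderiv_comp q hb differentiableAt_fst, fderiv_fst]
  rfl

lemma fderiv_coord {v : EuclideanSpace ℝ (Fin d) → EuclideanSpace ℝ (Fin d)}
    {x : EuclideanSpace ℝ (Fin d)} (hv : DifferentiableAt ℝ v x)
    (k : Fin d) (u : EuclideanSpace ℝ (Fin d)) :
    fderiv ℝ (fun y => v y k) x u = fderiv ℝ v x u k := by
  have : (fun y => v y k) = (EuclideanSpace.proj (𝕜 := ℝ) k) ∘ v := rfl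
  rw [this, fderiv_comp x (EuclideanSpace.proj (𝕜 := ℝ) k).differentiableAt hv,
    ContinuousLinearMap.fderiv]
  rfl

lemma contDiff_coord_fst {v : EuclideanSpace ℝ (Fin d) → EuclideanSpace ℝ (Fin d)}
    (hv : ContDiff ℝ (⊤ : ℕ∞) v) (k : Fin d) :
    ContDiff ℝ (⊤ : ℕ∞) (fun r : EuclideanSpace ℝ (Fin d) × ℝ => v r.1 k) :=
  (contDiff_coord hv k).comp contDiff_fst

lemma Dv_coord_ec {v : EuclideanSpace ℝ (Fin d) → EuclideanSpace ℝ (Fin d)}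
    (hv : ContDiff ℝ (⊤ : ℕ∞) v) (i k : Fin d) (q : EuclideanSpace ℝ (Fin d) × ℝ) :
    Dv (ec d i) (fun r => v r.1 k) q = dXv d i v q.1 k := by
  rw [Dv_fst_comp ((contDiff_coord hv k).differentiable (by simp) q.1)]
  rw [ec_fst, fderiv_coord (hv.differentiable (by simp) q.1)]
  rfl

lemma Dv_coord_xi {v : EuclideanSpace ℝ (Fin d) → EuclideanSpace ℝ (Fin d)}
    (hv : ContDiff ℝ (⊤ : ℕ∞) v) (k : Fin d) :
    Dv (xi d) (fun r => v r.1 k) = fun _ => 0 := by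
  funext q
  rw [Dv_fst_comp ((contDiff_coord hv k).differentiable (by simp) q.1)]
  simp

lemma Dv_snd_comp {φ : ℝ → ℝ} {q w : EuclideanSpace ℝ (Fin d) × ℝ}
    (hφ : DifferentiableAt ℝ φ q.2) :
    Dv w (fun p : EuclideanSpace ℝ (Fin d) × ℝ => φ p.2) q = deriv φ q.2 * w.2 := by
  have : (fun p : EuclideanSpace ℝ (Fin d) × ℝ => φ p.2) = φ ∘ Prod.snd := rfl
  rw [Dv, this, fderiv_comp q hφ differentiableAt_snd, fderiv_snd]
  simp only [ContinuousLinearMap.coe_comp', Function.comp_apply, ContinuousLinearMap.coe_snd']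
  rw [show fderiv ℝ φ q.2 w.2 = w.2 • fderiv ℝ φ q.2 1 by rw [← _root_.map_smul]; norm_num]
  simp [fderiv_apply_one_eq_deriv]; ring

lemma diffAt_gammaInv (γ : ℝ) {q : EuclideanSpace ℝ (Fin d) × ℝ} (hq : q ∈ UH d) :
    DifferentiableAt ℝ (fun p : EuclideanSpace ℝ (Fin d) × ℝ => γ / p.2) q :=
  diffAt_of_contDiffOn isOpen_UH (contDiffOn_gammaInv γ) hq

lemma Dv_gammaInv_ec (γ : ℝ) (i : Fin d) {q : EuclideanSpace ℝ (Fin d) × ℝ} (hq : q ∈ UH d) :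
    Dv (ec d i) (fun p : EuclideanSpace ℝ (Fin d) × ℝ => γ / p.2) q = 0 := by
  rw [Dv_snd_comp (by
    exact (differentiableAt_const γ).div differentiableAt_id (ne_of_gt hq))]
  simp

----------------------------------------------------------------
-- congruence on UH

lemma Dv2_congr_on {g h : EuclideanSpace ℝ (Fin d) × ℝ → ℝ}
    {w w' q : EuclideanSpace ℝ (Fin d) × ℝ}
    (hgh : ∀ y ∈ UH d, g y = h y) (hq : q ∈ UH d) :
    Dv w (Dv w' g) q = Dv w (Dv w' h) q :=
  Dv_congr_on isOpen_UH (fun y hy => Dv_congr_on isOpen_UH hgh hy) hq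

lemma dgamma_congr_on (γ : ℝ) {g h : EuclideanSpace ℝ (Fin d) × ℝ → ℝ}
    {q : EuclideanSpace ℝ (Fin d) × ℝ}
    (hgh : ∀ y ∈ UH d, g y = h y) (hq : q ∈ UH d) :
    dgamma d γ g q = dgamma d γ h q := by
  rw [dgamma_eq, dgamma_eq]
  congr 2
  · exact Finset.sum_congr rfl (fun i _ => Dv2_congr_on hgh hq)
  · exact Dv2_congr_on hgh hq
  · exact Dv_congr_on isOpen_UH hgh hq

----------------------------------------------------------------
-- commutation lemmas

lemma contDiff_Dv {X Y : Type*} [NormedAddCommGroup X] [NormedSpace ℝ X]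
    [NormedAddCommGroup Y] [NormedSpace ℝ Y] {g : X → Y} {w : X}
    (hg : ContDiff ℝ (⊤ : ℕ∞) g) : ContDiff ℝ (⊤ : ℕ∞) (Dv w g) :=
  (ContinuousLinearMap.apply ℝ Y w).contDiff.comp
    (hg.fderiv_right (m := (⊤:ℕ∞)) (by exact_mod_cast (le_refl (⊤ + 1 : ℕ∞))))

lemma schwarz_univ {X Y : Type*} [NormedAddCommGroup X] [NormedSpace ℝ X]
    [NormedAddCommGroup Y] [NormedSpace ℝ Y] {g : X → Y} {w w' : X}
    (hg : ContDiff ℝ (⊤ : ℕ∞) g) : Dv w (Dv w' g) = Dv w' (Dv w g) :=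
  funext fun x => schwarz isOpen_univ hg.contDiffOn (Set.mem_univ x)

lemma dX_dgamma_comm (γ : ℝ) {g : EuclideanSpace ℝ (Fin d) × ℝ → ℝ}
    (hg : ContDiffOn ℝ (⊤ : ℕ∞) g (UH d)) (k : Fin d)
    {q : EuclideanSpace ℝ (Fin d) × ℝ} (hq : q ∈ UH d) :
    dX d k (dgamma d γ g) q = dgamma d γ (dX d k g) q := by
  have hDg : ∀ w : EuclideanSpace ℝ (Fin d) × ℝ,
      ContDiffOn ℝ (⊤ : ℕ∞) (Dv w g) (UH d) := fun w => contDiffOn_Dv isOpen_UH hg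
  have hDDg : ∀ w w' : EuclideanSpace ℝ (Fin d) × ℝ,
      ContDiffOn ℝ (⊤ : ℕ∞) (Dv w (Dv w' g)) (UH d) :=
    fun w w' => contDiffOn_Dv isOpen_UH (hDg w')
  have diffA : DifferentiableAt ℝ
      (fun p => ∑ i : Fin d, Dv (ec d i) (Dv (ec d i) g) p) q := by
    apply DifferentiableAt.fun_sum
    intro i _
    exact diffAt_of_contDiffOn isOpen_UH (hDDg (ec d i) (ec d i)) hq
  have diffB : DifferentiableAt ℝ (Dv (xi d) (Dv (xi d) g)) q :=
    diffAt_of_contDiffOn isOpen_UH (hDDg (xi d) (xi d)) hq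
  have diffC : DifferentiableAt ℝ
      (fun p : EuclideanSpace ℝ (Fin d) × ℝ => γ / p.2 * Dv (xi d) g p) q :=
    (diffAt_gammaInv γ hq).mul (diffAt_of_contDiffOn isOpen_UH (hDg (xi d)) hq)
  -- expand LHS
  rw [dX_eq]
  have hsplit : dgamma d γ g = fun p =>
      ((∑ i : Fin d, Dv (ec d i) (Dv (ec d i) g) p)
        + Dv (xi d) (Dv (xi d) g) p) + γ / p.2 * Dv (xi d) g p := rfl
  rw [hsplit]
  rw [Dv_add (diffA.fun_add diffB) diffC, Dv_add diffA diffB]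
  rw [Dv_sum Finset.univ _ (fun i _ => diffAt_of_contDiffOn isOpen_UH (hDDg _ _) hq)]
  -- each second-order term swaps
  have swap2 : ∀ w : EuclideanSpace ℝ (Fin d) × ℝ,
      Dv (ec d k) (Dv w (Dv w g)) q = Dv w (Dv w (Dv (ec d k) g)) q := by
    intro w
    rw [schwarz isOpen_UH (hDg w) hq]
    exact Dv_congr_on isOpen_UH
      (fun y hy => schwarz isOpen_UH hg hy) hq
  -- the gamma term
  have hC : Dv (ec d k) (fun p : EuclideanSpace ℝ (Fin d) × ℝ =>
      γ / p.2 * Dv (xi d) g p) q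
      = γ / q.2 * Dv (xi d) (Dv (ec d k) g) q := by
    rw [Dv_mul (diffAt_gammaInv γ hq)
      (diffAt_of_contDiffOn isOpen_UH (hDg (xi d)) hq)]
    rw [Dv_gammaInv_ec γ k hq, schwarz isOpen_UH hg hq]
    ring
  rw [hC]
  simp only [swap2]
  rfl

----------------------------------------------------------------
-- list versions of iterated derivatives

def dXL (d : ℕ) (L : List (Fin d)) (g : EuclideanSpace ℝ (Fin d) × ℝ → ℝ) :
    EuclideanSpace ℝ (Fin d) × ℝ → ℝ :=
  L.foldr (fun i h => dX d i h) g

lemma dXIter_eq_dXL {p : ℕ} (js : Fin p → Fin d) (g : EuclideanSpace ℝ (Fin d) × ℝ → ℝ) :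
    dXIter d js g = dXL d (List.ofFn js) g := rfl

lemma dXIter_cons {p : ℕ} (j : Fin d) (js : Fin p → Fin d)
    (g : EuclideanSpace ℝ (Fin d) × ℝ → ℝ) :
    dXIter d (Fin.cons j js) g = dX d j (dXIter d js g) := by
  simp [dXIter, List.ofFn_succ]

def dXvL (d : ℕ) (L : List (Fin d)) (v : EuclideanSpace ℝ (Fin d) → EuclideanSpace ℝ (Fin d)) :
    EuclideanSpace ℝ (Fin d) → EuclideanSpace ℝ (Fin d) :=
  L.foldr (fun i w => dXv d i w) v

lemma dXvIter_eq_dXvL {p : ℕ} (js : Fin p → Fin d)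
    (v : EuclideanSpace ℝ (Fin d) → EuclideanSpace ℝ (Fin d)) :
    dXvIter d js v = dXvL d (List.ofFn js) v := rfl

lemma dXvIter_cons {p : ℕ} (j : Fin d) (js : Fin p → Fin d)
    (v : EuclideanSpace ℝ (Fin d) → EuclideanSpace ℝ (Fin d)) :
    dXvIter d (Fin.cons j js) v = dXv d j (dXvIter d js v) := by
  simp [dXvIter, List.ofFn_succ]

lemma contDiffOn_dXL (L : List (Fin d)) {g : EuclideanSpace ℝ (Fin d) × ℝ → ℝ}
    (hg : ContDiffOn ℝ (⊤ : ℕ∞) g (UH d)) :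
    ContDiffOn ℝ (⊤ : ℕ∞) (dXL d L g) (UH d) := by
  induction L with
  | nil => exact hg
  | cons a L ih => exact contDiffOn_dX a ih

lemma dXL_dgamma_comm (γ : ℝ) (L : List (Fin d)) {g : EuclideanSpace ℝ (Fin d) × ℝ → ℝ}
    (hg : ContDiffOn ℝ (⊤ : ℕ∞) g (UH d)) :
    ∀ q ∈ UH d, dgamma d γ (dXL d L g) q = dXL d L (dgamma d γ g) q := by
  induction L with
  | nil => intro q _; rfl
  | cons a L ih =>
    intro q hq
    have h1 : dgamma d γ (dX d a (dXL d L g)) q = dX d a (dgamma d γ (dXL d L g)) q :=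
      (dX_dgamma_comm γ (contDiffOn_dXL L hg) a hq).symm
    have h2 : dX d a (dgamma d γ (dXL d L g)) q = dX d a (dXL d L (dgamma d γ g)) q := by
      rw [dX_eq, dX_eq]
      exact Dv_congr_on isOpen_UH ih hq
    exact h1.trans h2

lemma dXIter_dgamma_comm (γ : ℝ) {p : ℕ} (js : Fin p → Fin d)
    {g : EuclideanSpace ℝ (Fin d) × ℝ → ℝ}
    (hg : ContDiffOn ℝ (⊤ : ℕ∞) g (UH d)) :
    ∀ q ∈ UH d, dgamma d γ (dXIter d js g) q = dXIter d js (dgamma d γ g) q := by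
  rw [dXIter_eq_dXL, dXIter_eq_dXL]
  exact dXL_dgamma_comm γ _ hg

----------------------------------------------------------------
-- vector field commutation

lemma dXv_vecLapX_comm {w : EuclideanSpace ℝ (Fin d) → EuclideanSpace ℝ (Fin d)}
    (hw : ContDiff ℝ (⊤ : ℕ∞) w) (j : Fin d) :
    dXv d j (vecLapX d w) = vecLapX d (dXv d j w) := by
  funext x
  have hD : ∀ u : EuclideanSpace ℝ (Fin d), ContDiff ℝ (⊤ : ℕ∞) (Dv u w) :=
    fun u => contDiff_Dv hw
  have hDD : ∀ u u' : EuclideanSpace ℝ (Fin d),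
      ContDiff ℝ (⊤ : ℕ∞) (Dv u (Dv u' w)) := fun u u' => contDiff_Dv (hD u')
  have : vecLapX d w = fun y => ∑ i : Fin d,
      Dv (EuclideanSpace.single i 1) (Dv (EuclideanSpace.single i 1) w) y := rfl
  rw [dXv_eq, this]
  rw [Dv_sum Finset.univ _ (fun i _ =>
    ((hDD _ _).differentiable (by simp) x))]
  have key : ∀ i : Fin d,
      Dv (EuclideanSpace.single j 1) (Dv (EuclideanSpace.single i 1)
        (Dv (EuclideanSpace.single i 1) w)) x
      = Dv (EuclideanSpace.single i 1) (Dv (EuclideanSpace.single i 1)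
        (Dv (EuclideanSpace.single j 1) w)) x := by
    intro i
    rw [schwarz_univ (hD _), schwarz_univ hw]
  simp only [key]
  rfl

lemma vecLapX_iter_dXv_comm (l : ℕ)
    {w : EuclideanSpace ℝ (Fin d) → EuclideanSpace ℝ (Fin d)}
    (hw : ContDiff ℝ (⊤ : ℕ∞) w) (j : Fin d) :
    dXv d j ((vecLapX d)^[l] w) = (vecLapX d)^[l] (dXv d j w) := by
  induction l generalizing w with
  | zero => rfl
  | succ n ih =>
    rw [Function.iterate_succ_apply, Function.iterate_succ_apply,
      ← dXv_vecLapX_comm hw j]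
    exact ih (contDiff_vecLapX hw)

----------------------------------------------------------------
-- the key one-step Leibniz computation

lemma keyC (γ : ℝ) {a : EuclideanSpace ℝ (Fin d) → EuclideanSpace ℝ (Fin d)}
    (ha : ContDiff ℝ (⊤ : ℕ∞) a) {g : EuclideanSpace ℝ (Fin d) × ℝ → ℝ}
    (hg : ContDiffOn ℝ (⊤ : ℕ∞) g (UH d)) {q : EuclideanSpace ℝ (Fin d) × ℝ}
    (hq : q ∈ UH d) :
    dgamma d γ (fun r => ∑ k : Fin d, a r.1 k * dX d k g r) q
      = (∑ k : Fin d, vecLapX d a q.1 k * dX d k g q)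
        + (∑ k : Fin d, a q.1 k * dX d k (dgamma d γ g) q)
        + 2 * ∑ j : Fin d, ∑ k : Fin d, dXv d j a q.1 k * dX d k (dX d j g) q := by
  set T : EuclideanSpace ℝ (Fin d) × ℝ → ℝ :=
    fun r => ∑ k : Fin d, a r.1 k * dX d k g r with hT
  have hGc : ∀ k : Fin d, ContDiffOn ℝ (⊤ : ℕ∞) (Dv (ec d k) g) (UH d) :=
    fun k => contDiffOn_Dv isOpen_UH hg
  have hGdiff : ∀ (k : Fin d) (x), x ∈ UH d → DifferentiableAt ℝ (Dv (ec d k) g) x :=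
    fun k x hx => diffAt_of_contDiffOn isOpen_UH (hGc k) hx
  have hDwGc : ∀ (w) (k : Fin d), ContDiffOn ℝ (⊤ : ℕ∞) (Dv w (Dv (ec d k) g)) (UH d) :=
    fun w k => contDiffOn_Dv isOpen_UH (hGc k)
  have hDwGdiff : ∀ (w) (k : Fin d) (x), x ∈ UH d →
      DifferentiableAt ℝ (Dv w (Dv (ec d k) g)) x :=
    fun w k x hx => diffAt_of_contDiffOn isOpen_UH (hDwGc w k) hx
  have haFc : ∀ k : Fin d, ContDiff ℝ (⊤ : ℕ∞)
      (fun r : EuclideanSpace ℝ (Fin d) × ℝ => a r.1 k) := fun k => contDiff_coord_fst ha k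
  have haFdiff : ∀ (k : Fin d) (x : EuclideanSpace ℝ (Fin d) × ℝ),
      DifferentiableAt ℝ (fun r : EuclideanSpace ℝ (Fin d) × ℝ => a r.1 k) x :=
    fun k x => ((haFc k).differentiable (by simp) x)
  have hdXva : ∀ i : Fin d, ContDiff ℝ (⊤ : ℕ∞) (dXv d i a) := fun i => contDiff_dXv i ha
  have hdXvaF : ∀ (i k : Fin d) (x : EuclideanSpace ℝ (Fin d) × ℝ),
      DifferentiableAt ℝ (fun r : EuclideanSpace ℝ (Fin d) × ℝ => dXv d i a r.1 k) x :=
    fun i k x => ((contDiff_coord_fst (hdXva i) k).differentiable (by simp) x)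
  have hDvaF_ec : ∀ i k : Fin d, Dv (ec d i)
      (fun r : EuclideanSpace ℝ (Fin d) × ℝ => a r.1 k)
      = fun r => dXv d i a r.1 k :=
    fun i k => funext fun x => Dv_coord_ec ha i k x
  have hDvaF_xi : ∀ k : Fin d, Dv (xi d)
      (fun r : EuclideanSpace ℝ (Fin d) × ℝ => a r.1 k) = fun _ => 0 :=
    fun k => Dv_coord_xi ha k
  -- first derivative, in x-directions
  have D1i : ∀ (i : Fin d) (x), x ∈ UH d → Dv (ec d i) T x
      = (∑ k : Fin d, dXv d i a x.1 k * Dv (ec d k) g x)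
        + ∑ k : Fin d, a x.1 k * Dv (ec d i) (Dv (ec d k) g) x := by
    intro i x hx
    rw [hT, Dv_sum Finset.univ (fun k => fun r => a r.1 k * dX d k g r)
      (fun k _ => (haFdiff k x).mul (hGdiff k x hx))]
    rw [← Finset.sum_add_distrib]
    refine Finset.sum_congr rfl fun k _ => ?_
    rw [show (fun r : EuclideanSpace ℝ (Fin d) × ℝ => a r.1 k * dX d k g r)
        = fun r => (fun r' : EuclideanSpace ℝ (Fin d) × ℝ => a r'.1 k) r
            * Dv (ec d k) g r from rfl]
    rw [Dv_mul (haFdiff k x) (hGdiff k x hx), Dv_coord_ec ha i k x]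
  -- first derivative, vertical direction
  have D1xi : ∀ (x), x ∈ UH d → Dv (xi d) T x
      = ∑ k : Fin d, a x.1 k * Dv (xi d) (Dv (ec d k) g) x := by
    intro x hx
    rw [hT, Dv_sum Finset.univ (fun k => fun r => a r.1 k * dX d k g r)
      (fun k _ => (haFdiff k x).mul (hGdiff k x hx))]
    refine Finset.sum_congr rfl fun k _ => ?_
    rw [show (fun r : EuclideanSpace ℝ (Fin d) × ℝ => a r.1 k * dX d k g r)
        = fun r => (fun r' : EuclideanSpace ℝ (Fin d) × ℝ => a r'.1 k) r
            * Dv (ec d k) g r from rfl]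
    rw [Dv_mul (haFdiff k x) (hGdiff k x hx)]
    rw [show Dv (xi d) (fun r' : EuclideanSpace ℝ (Fin d) × ℝ => a r'.1 k) x = 0 from
      congrFun (hDvaF_xi k) x]
    ring
  -- second derivative, x-directions
  have D2i : ∀ i : Fin d, Dv (ec d i) (Dv (ec d i) T) q
      = (∑ k : Fin d, dXv d i (dXv d i a) q.1 k * Dv (ec d k) g q)
        + (∑ k : Fin d, dXv d i a q.1 k * Dv (ec d i) (Dv (ec d k) g) q)
        + ((∑ k : Fin d, dXv d i a q.1 k * Dv (ec d i) (Dv (ec d k) g) q)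
          + ∑ k : Fin d, a q.1 k * Dv (ec d i) (Dv (ec d i) (Dv (ec d k) g)) q) := by
    intro i
    have step : Dv (ec d i) (Dv (ec d i) T) q
        = Dv (ec d i) (fun x => (∑ k : Fin d, dXv d i a x.1 k * Dv (ec d k) g x)
            + ∑ k : Fin d, a x.1 k * Dv (ec d i) (Dv (ec d k) g) x) q :=
      Dv_congr_on isOpen_UH (fun y hy => D1i i y hy) hq
    rw [step]
    have diff1 : DifferentiableAt ℝ
        (fun x => ∑ k : Fin d, dXv d i a x.1 k * Dv (ec d k) g x) q := by
      apply DifferentiableAt.fun_sum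
      exact fun k _ => (hdXvaF i k q).mul (hGdiff k q hq)
    have diff2 : DifferentiableAt ℝ
        (fun x => ∑ k : Fin d, a x.1 k * Dv (ec d i) (Dv (ec d k) g) x) q := by
      apply DifferentiableAt.fun_sum
      exact fun k _ => (haFdiff k q).mul (hDwGdiff (ec d i) k q hq)
    rw [Dv_add diff1 diff2]
    congr 1
    · rw [Dv_sum Finset.univ (fun k => fun x => dXv d i a x.1 k * Dv (ec d k) g x)
        (fun k _ => (hdXvaF i k q).mul (hGdiff k q hq))]
      rw [← Finset.sum_add_distrib]
      refine Finset.sum_congr rfl fun k _ => ?_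
      rw [show (fun x : EuclideanSpace ℝ (Fin d) × ℝ => dXv d i a x.1 k * Dv (ec d k) g x)
          = fun x => (fun x' : EuclideanSpace ℝ (Fin d) × ℝ => dXv d i a x'.1 k) x
              * Dv (ec d k) g x from rfl]
      rw [Dv_mul (hdXvaF i k q) (hGdiff k q hq), Dv_coord_ec (hdXva i) i k q]
    · rw [Dv_sum Finset.univ (fun k => fun x => a x.1 k * Dv (ec d i) (Dv (ec d k) g) x)
        (fun k _ => (haFdiff k q).mul (hDwGdiff (ec d i) k q hq))]
      rw [← Finset.sum_add_distrib]
      refine Finset.sum_congr rfl fun k _ => ?_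
      rw [show (fun x : EuclideanSpace ℝ (Fin d) × ℝ => a x.1 k * Dv (ec d i) (Dv (ec d k) g) x)
          = fun x => (fun x' : EuclideanSpace ℝ (Fin d) × ℝ => a x'.1 k) x
              * Dv (ec d i) (Dv (ec d k) g) x from rfl]
      rw [Dv_mul (haFdiff k q) (hDwGdiff (ec d i) k q hq), Dv_coord_ec ha i k q]
  -- second derivative, vertical
  have D2xi : Dv (xi d) (Dv (xi d) T) q
      = ∑ k : Fin d, a q.1 k * Dv (xi d) (Dv (xi d) (Dv (ec d k) g)) q := by
    have step : Dv (xi d) (Dv (xi d) T) q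
        = Dv (xi d) (fun x => ∑ k : Fin d,
            a x.1 k * Dv (xi d) (Dv (ec d k) g) x) q :=
      Dv_congr_on isOpen_UH (fun y hy => D1xi y hy) hq
    rw [step]
    rw [Dv_sum Finset.univ (fun k => fun x => a x.1 k * Dv (xi d) (Dv (ec d k) g) x)
      (fun k _ => (haFdiff k q).mul (hDwGdiff (xi d) k q hq))]
    refine Finset.sum_congr rfl fun k _ => ?_
    rw [show (fun x : EuclideanSpace ℝ (Fin d) × ℝ => a x.1 k * Dv (xi d) (Dv (ec d k) g) x)
        = fun x => (fun x' : EuclideanSpace ℝ (Fin d) × ℝ => a x'.1 k) x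
            * Dv (xi d) (Dv (ec d k) g) x from rfl]
    rw [Dv_mul (haFdiff k q) (hDwGdiff (xi d) k q hq)]
    rw [show Dv (xi d) (fun r' : EuclideanSpace ℝ (Fin d) × ℝ => a r'.1 k) q = 0 from
      congrFun (hDvaF_xi k) q]
    ring
  -- assemble
  rw [dgamma_eq]
  rw [Finset.sum_congr rfl (fun i _ => D2i i), D2xi, D1xi q hq]
  -- identify the vector Laplacian
  have hLap : ∀ k : Fin d, (∑ i : Fin d, dXv d i (dXv d i a) q.1 k)
      = vecLapX d a q.1 k := by
    intro k
    rw [vecLapX]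
    rw [WithLp.ofLp_sum]; exact (Finset.sum_apply k Finset.univ fun i => dXv d i (dXv d i a) q.1).symm
  -- identify dgamma of dX k g
  have hdg : ∀ k : Fin d, (∑ i : Fin d, Dv (ec d i) (Dv (ec d i) (Dv (ec d k) g)) q)
      + Dv (xi d) (Dv (xi d) (Dv (ec d k) g)) q
      + γ / q.2 * Dv (xi d) (Dv (ec d k) g) q
      = dX d k (dgamma d γ g) q := by
    intro k
    rw [← dgamma_eq]
    exact (dX_dgamma_comm γ hg k hq).symm
  -- swap derivatives in the cross term
  have hswap : ∀ i k : Fin d, Dv (ec d i) (Dv (ec d k) g) q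
      = Dv (ec d k) (Dv (ec d i) g) q := fun i k => schwarz isOpen_UH hg hq
  simp only [Finset.sum_add_distrib, Finset.mul_sum, dX_eq]
  have eA : (∑ x : Fin d, ∑ k : Fin d, dXv d x (dXv d x a) q.1 k * Dv (ec d k) g q)
      = ∑ k : Fin d, vecLapX d a q.1 k * Dv (ec d k) g q := by
    rw [Finset.sum_comm]
    exact Finset.sum_congr rfl fun k _ => by rw [← Finset.sum_mul, hLap k]
  have eB : (∑ x : Fin d, ∑ k : Fin d,
        a q.1 k * Dv (ec d x) (Dv (ec d x) (Dv (ec d k) g)) q)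
      = ∑ k : Fin d, a q.1 k
          * ∑ x : Fin d, Dv (ec d x) (Dv (ec d x) (Dv (ec d k) g)) q := by
    rw [Finset.sum_comm]
    exact Finset.sum_congr rfl fun k _ => (Finset.mul_sum _ _ _).symm
  have e3 : (∑ x : Fin d, ∑ k : Fin d,
        dXv d x a q.1 k * Dv (ec d x) (Dv (ec d k) g) q)
      = ∑ x : Fin d, ∑ k : Fin d,
        dXv d x a q.1 k * Dv (ec d k) (Dv (ec d x) g) q :=
    Finset.sum_congr rfl fun i _ => Finset.sum_congr rfl fun k _ => by rw [hswap i k]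
  have eD : ∀ k : Fin d, a q.1 k * Dv (ec d k) (dgamma d γ g) q
      = a q.1 k * (∑ x : Fin d, Dv (ec d x) (Dv (ec d x) (Dv (ec d k) g)) q)
        + a q.1 k * Dv (xi d) (Dv (xi d) (Dv (ec d k) g)) q
        + γ / q.2 * (a q.1 k * Dv (xi d) (Dv (ec d k) g) q) := by
    intro k
    simp only [dX_eq] at hdg
    rw [← hdg k]
    ring
  rw [eA, eB, e3]
  rw [Finset.sum_congr rfl (fun k _ => eD k)]
  simp only [Finset.sum_add_distrib, two_mul]
  ring

----------------------------------------------------------------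
-- linearity of dgamma on UH

lemma dgamma_sum {ι : Type*} (γ : ℝ) (t : Finset ι)
    (F : ι → EuclideanSpace ℝ (Fin d) × ℝ → ℝ)
    (hF : ∀ i ∈ t, ContDiffOn ℝ (⊤ : ℕ∞) (F i) (UH d))
    {q : EuclideanSpace ℝ (Fin d) × ℝ} (hq : q ∈ UH d) :
    dgamma d γ (fun p => ∑ i ∈ t, F i p) q = ∑ i ∈ t, dgamma d γ (F i) q := by
  have hdiff : ∀ i ∈ t, ∀ x ∈ UH d, DifferentiableAt ℝ (F i) x :=
    fun i hi x hx => diffAt_of_contDiffOn isOpen_UH (hF i hi) hx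
  have hDdiff : ∀ (w) (i), i ∈ t → ∀ x ∈ UH d, DifferentiableAt ℝ (Dv w (F i)) x :=
    fun w i hi x hx => diffAt_of_contDiffOn isOpen_UH (contDiffOn_Dv isOpen_UH (hF i hi)) hx
  have l1 : ∀ (w) (x), x ∈ UH d →
      Dv w (fun p => ∑ i ∈ t, F i p) x = ∑ i ∈ t, Dv w (F i) x :=
    fun w x hx => Dv_sum t F (fun i hi => hdiff i hi x hx)
  have l2 : ∀ (w w'), Dv w (Dv w' (fun p => ∑ i ∈ t, F i p)) q
      = ∑ i ∈ t, Dv w (Dv w' (F i)) q := by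
    intro w w'
    rw [Dv_congr_on isOpen_UH (fun y hy => l1 w' y hy) hq]
    exact Dv_sum t _ (fun i hi => hDdiff w' i hi q hq)
  rw [dgamma_eq]
  simp only [l2, l1 (xi d) q hq]
  rw [Finset.sum_comm]
  simp only [Finset.mul_sum]
  rw [← Finset.sum_add_distrib, ← Finset.sum_add_distrib]
  exact Finset.sum_congr rfl fun i _ => rfl

lemma dgamma_const_mul (γ c : ℝ) {F : EuclideanSpace ℝ (Fin d) × ℝ → ℝ}
    (hF : ContDiffOn ℝ (⊤ : ℕ∞) F (UH d))
    {q : EuclideanSpace ℝ (Fin d) × ℝ} (hq : q ∈ UH d) :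
    dgamma d γ (fun p => c * F p) q = c * dgamma d γ F q := by
  have l1 : ∀ (w) (x), x ∈ UH d →
      Dv w (fun p => c * F p) x = c * Dv w F x := by
    intro w x hx
    have := Dv_const_smul (w := w) (x := x) c (diffAt_of_contDiffOn isOpen_UH hF hx)
    simpa using this
  have l2 : ∀ (w w'), Dv w (Dv w' (fun p => c * F p)) q
      = c * Dv w (Dv w' F) q := by
    intro w w'
    rw [Dv_congr_on isOpen_UH (fun y hy => l1 w' y hy) hq]
    have := Dv_const_smul (g := Dv w' F) (w := w) (x := q) c
      (diffAt_of_contDiffOn isOpen_UH (contDiffOn_Dv isOpen_UH hF) hq)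
    simpa using this
  rw [dgamma_eq, dgamma_eq]
  simp only [l2, l1 (xi d) q hq, Finset.mul_sum]
  ring_nf
  rw [Finset.mul_sum]

----------------------------------------------------------------
-- combinatorics of multinomial coefficients

def cc (m a b : ℕ) : ℝ :=
  (m.factorial : ℝ) / ((a.factorial : ℝ) * (b.factorial : ℝ) * ((m - a - b).factorial : ℝ))

lemma fact_ne (n : ℕ) : ((n.factorial : ℝ)) ≠ 0 := by
  exact_mod_cast n.factorial_ne_zero

lemma cid1 (m a b : ℕ) : ((a : ℝ) + 1) * cc (m + 1) (a + 1) b = ((m : ℝ) + 1) * cc m a b := by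
  unfold cc
  rw [show m + 1 - (a + 1) - b = m - a - b by omega]
  rw [Nat.factorial_succ (m), Nat.factorial_succ (a)]
  have h1 := fact_ne m; have h2 := fact_ne a; have h3 := fact_ne b; have h4 := fact_ne (m - a - b)
  push_cast
  field_simp

lemma cid2 (m a b : ℕ) : ((b : ℝ) + 1) * cc (m + 1) a (b + 1) = ((m : ℝ) + 1) * cc m a b := by
  unfold cc
  rw [show m + 1 - a - (b + 1) = m - a - b by omega]
  rw [Nat.factorial_succ (m), Nat.factorial_succ (b)]
  have h1 := fact_ne m; have h2 := fact_ne a; have h3 := fact_ne b; have h4 := fact_ne (m - a - b)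
  push_cast
  field_simp

lemma cid3 {m a b : ℕ} (h : a + b ≤ m) :
    (((m + 1 - a - b : ℕ)) : ℝ) * cc (m + 1) a b = ((m : ℝ) + 1) * cc m a b := by
  unfold cc
  rw [show m + 1 - a - b = (m - a - b) + 1 by omega]
  rw [Nat.factorial_succ (m), Nat.factorial_succ (m - a - b)]
  have h1 := fact_ne m; have h2 := fact_ne a; have h3 := fact_ne b; have h4 := fact_ne (m - a - b)
  push_cast
  field_simp

lemma comb (m : ℕ) (u : ℕ → ℕ → ℕ → ℝ) :
    ∑ a ∈ Finset.range (m + 2), ∑ b ∈ Finset.range (m + 2 - a),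
        cc (m + 1) a b * (2 ^ (m + 1 - a - b) * u (m + 1 - a - b) a b)
      = ∑ a ∈ Finset.range (m + 1), ∑ b ∈ Finset.range (m + 1 - a),
        cc m a b * (2 ^ (m - a - b) *
          (u (m - a - b) (a + 1) b + u (m - a - b) a (b + 1) + 2 * u (m - a - b + 1) a b)) := by
  have hm : ((m : ℝ) + 1) ≠ 0 := by positivity
  -- split LHS into three parts
  have split : ∀ a ∈ Finset.range (m + 2), ∀ b ∈ Finset.range (m + 2 - a),
      cc (m + 1) a b * (2 ^ (m + 1 - a - b) * u (m + 1 - a - b) a b)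
        = (a : ℝ) / ((m : ℝ) + 1) * (cc (m + 1) a b * (2 ^ (m + 1 - a - b) * u (m + 1 - a - b) a b))
          + (b : ℝ) / ((m : ℝ) + 1) * (cc (m + 1) a b * (2 ^ (m + 1 - a - b) * u (m + 1 - a - b) a b))
          + ((m + 1 - a - b : ℕ) : ℝ) / ((m : ℝ) + 1)
            * (cc (m + 1) a b * (2 ^ (m + 1 - a - b) * u (m + 1 - a - b) a b)) := by
    intro a ha b hb
    simp only [Finset.mem_range] at ha hb
    have hsum : ((a : ℝ) + (b : ℝ) + ((m + 1 - a - b : ℕ) : ℝ)) = (m : ℝ) + 1 := by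
      have : a + b + (m + 1 - a - b) = m + 1 := by omega
      exact_mod_cast this
    set X := cc (m + 1) a b * (2 ^ (m + 1 - a - b) * u (m + 1 - a - b) a b) with hX
    have hre : (a : ℝ) / ((m : ℝ) + 1) * X + (b : ℝ) / ((m : ℝ) + 1) * X
        + ((m + 1 - a - b : ℕ) : ℝ) / ((m : ℝ) + 1) * X
        = (((a : ℝ) + (b : ℝ) + ((m + 1 - a - b : ℕ) : ℝ)) / ((m : ℝ) + 1)) * X := by
      ring
    rw [hre, hsum, div_self hm, one_mul]
  rw [Finset.sum_congr rfl (fun a ha => Finset.sum_congr rfl (fun b hb => split a ha b hb))]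
  simp only [Finset.sum_add_distrib]
  -- part 1
  have P1 : (∑ a ∈ Finset.range (m + 2), ∑ b ∈ Finset.range (m + 2 - a),
      (a : ℝ) / ((m : ℝ) + 1) * (cc (m + 1) a b * (2 ^ (m + 1 - a - b) * u (m + 1 - a - b) a b)))
      = ∑ a ∈ Finset.range (m + 1), ∑ b ∈ Finset.range (m + 1 - a),
        cc m a b * (2 ^ (m - a - b) * u (m - a - b) (a + 1) b) := by
    rw [Finset.sum_range_succ']
    simp only [Nat.cast_zero, zero_div, zero_mul, Finset.sum_const_zero, add_zero]
    refine Finset.sum_congr rfl fun a _ => ?_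
    rw [show m + 2 - (a + 1) = m + 1 - a by omega]
    refine Finset.sum_congr rfl fun b _ => ?_
    rw [show m + 1 - (a + 1) - b = m - a - b by omega]
    have key : ((a : ℝ) + 1) / ((m : ℝ) + 1) * cc (m + 1) (a + 1) b = cc m a b := by
      rw [div_mul_eq_mul_div, cid1]
      exact mul_div_cancel_left₀ _ hm
    push_cast
    rw [← key]
    ring
  -- part 2
  have P2 : (∑ a ∈ Finset.range (m + 2), ∑ b ∈ Finset.range (m + 2 - a),
      (b : ℝ) / ((m : ℝ) + 1) * (cc (m + 1) a b * (2 ^ (m + 1 - a - b) * u (m + 1 - a - b) a b)))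
      = ∑ a ∈ Finset.range (m + 1), ∑ b ∈ Finset.range (m + 1 - a),
        cc m a b * (2 ^ (m - a - b) * u (m - a - b) a (b + 1)) := by
    rw [Finset.sum_range_succ]
    have inner : ∀ a, a ∈ Finset.range (m + 2) →
        (∑ b ∈ Finset.range (m + 2 - a),
          (b : ℝ) / ((m : ℝ) + 1) * (cc (m + 1) a b * (2 ^ (m + 1 - a - b) * u (m + 1 - a - b) a b)))
        = ∑ b ∈ Finset.range (m + 1 - a),
          cc m a b * (2 ^ (m - a - b) * u (m - a - b) a (b + 1)) := by
      intro a ha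
      simp only [Finset.mem_range] at ha
      rw [show m + 2 - a = (m + 1 - a) + 1 by omega]
      rw [Finset.sum_range_succ']
      simp only [Nat.cast_zero, zero_div, zero_mul, add_zero]
      refine Finset.sum_congr rfl fun b _ => ?_
      rw [show m + 1 - a - (b + 1) = m - a - b by omega]
      have key : ((b : ℝ) + 1) / ((m : ℝ) + 1) * cc (m + 1) a (b + 1) = cc m a b := by
        rw [div_mul_eq_mul_div, cid2]
        exact mul_div_cancel_left₀ _ hm
      push_cast
      rw [← key]
      ring
    rw [Finset.sum_congr rfl (fun a ha => inner a (by
      simp only [Finset.mem_range] at ha ⊢; omega))]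
    rw [inner (m + 1) (by simp), show m + 1 - (m + 1) = 0 by omega]
    simp
  -- part 3
  have P3 : (∑ a ∈ Finset.range (m + 2), ∑ b ∈ Finset.range (m + 2 - a),
      ((m + 1 - a - b : ℕ) : ℝ) / ((m : ℝ) + 1)
        * (cc (m + 1) a b * (2 ^ (m + 1 - a - b) * u (m + 1 - a - b) a b)))
      = ∑ a ∈ Finset.range (m + 1), ∑ b ∈ Finset.range (m + 1 - a),
        cc m a b * (2 ^ (m - a - b) * (2 * u (m - a - b + 1) a b)) := by
    rw [Finset.sum_range_succ]
    rw [show m + 2 - (m + 1) = 1 by omega]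
    have hlast : (∑ b ∈ Finset.range 1,
        ((m + 1 - (m + 1) - b : ℕ) : ℝ) / ((m : ℝ) + 1)
          * (cc (m + 1) (m + 1) b * (2 ^ (m + 1 - (m + 1) - b) * u (m + 1 - (m + 1) - b) (m + 1) b))) = 0 := by
      simp
    rw [hlast, add_zero]
    refine Finset.sum_congr rfl fun a ha => ?_
    simp only [Finset.mem_range] at ha
    rw [show m + 2 - a = (m + 1 - a) + 1 by omega]
    rw [Finset.sum_range_succ]
    have hb0 : ((m + 1 - a - (m + 1 - a) : ℕ) : ℝ) / ((m : ℝ) + 1)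
        * (cc (m + 1) a (m + 1 - a) * (2 ^ (m + 1 - a - (m + 1 - a))
          * u (m + 1 - a - (m + 1 - a)) a (m + 1 - a))) = 0 := by
      rw [show m + 1 - a - (m + 1 - a) = 0 by omega]
      simp
    rw [hb0, add_zero]
    refine Finset.sum_congr rfl fun b hb => ?_
    simp only [Finset.mem_range] at hb
    have hab : a + b ≤ m := by omega
    have key : ((m + 1 - a - b : ℕ) : ℝ) / ((m : ℝ) + 1) * cc (m + 1) a b = cc m a b := by
      rw [div_mul_eq_mul_div, cid3 hab]
      exact mul_div_cancel_left₀ _ hm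
    rw [show m + 1 - a - b = (m - a - b) + 1 by omega] at key ⊢
    rw [pow_succ]
    rw [← key]
    ring
  rw [P1, P2, P3]
  rw [← Finset.sum_add_distrib, ← Finset.sum_add_distrib]
  refine Finset.sum_congr rfl fun a _ => ?_
  rw [← Finset.sum_add_distrib, ← Finset.sum_add_distrib]
  refine Finset.sum_congr rfl fun b _ => ?_
  ring

----------------------------------------------------------------
-- the master sum and its one-step evolution

lemma sum_cons (r : ℕ) (F : (Fin (r + 1) → Fin d) → ℝ) :
    ∑ js : Fin (r + 1) → Fin d, F js
      = ∑ j : Fin d, ∑ js : Fin r → Fin d, F (Fin.cons j js) := by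
  rw [← Equiv.sum_comp (Fin.consEquiv (fun _ : Fin (r + 1) => Fin d)) F]
  rw [Fintype.sum_prod_type]
  rfl

def VV (d : ℕ) (γ : ℝ) (v : EuclideanSpace ℝ (Fin d) → EuclideanSpace ℝ (Fin d))
    (f : EuclideanSpace ℝ (Fin d) × ℝ → ℝ) (r a b : ℕ)
    (q : EuclideanSpace ℝ (Fin d) × ℝ) : ℝ :=
  ∑ js : Fin r → Fin d, ∑ k : Fin d,
    (vecLapX d)^[a] (dXvIter d js v) q.1 k
      * dX d k (dXIter d js ((dgamma d γ)^[b] f)) q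

section main
variable (γ : ℝ) {v : EuclideanSpace ℝ (Fin d) → EuclideanSpace ℝ (Fin d)}
  (hv : ContDiff ℝ (⊤ : ℕ∞) v) {f : EuclideanSpace ℝ (Fin d) × ℝ → ℝ}
  (hf : ContDiffOn ℝ (⊤ : ℕ∞) f (UH d))

lemma contDiffOn_T {a : EuclideanSpace ℝ (Fin d) → EuclideanSpace ℝ (Fin d)}
    (ha : ContDiff ℝ (⊤ : ℕ∞) a) {g : EuclideanSpace ℝ (Fin d) × ℝ → ℝ}
    (hg : ContDiffOn ℝ (⊤ : ℕ∞) g (UH d)) :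
    ContDiffOn ℝ (⊤ : ℕ∞) (fun r => ∑ k : Fin d, a r.1 k * dX d k g r) (UH d) :=
  ContDiffOn.sum fun k _ =>
    ((contDiff_coord_fst ha k).contDiffOn).mul (contDiffOn_dX k hg)

include hv hf in
lemma contDiffOn_VV (r a b : ℕ) :
    ContDiffOn ℝ (⊤ : ℕ∞) (VV d γ v f r a b) (UH d) := by
  unfold VV
  exact ContDiffOn.sum fun js _ =>
    contDiffOn_T (contDiff_vecLapX_iter a (contDiff_dXvIter js hv))
      (contDiffOn_dXIter js (contDiffOn_dgamma_iter γ b hf))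

include hv hf in
lemma dgamma_VV (r a b : ℕ) {q : EuclideanSpace ℝ (Fin d) × ℝ} (hq : q ∈ UH d) :
    dgamma d γ (VV d γ v f r a b) q
      = VV d γ v f r (a + 1) b q + VV d γ v f r a (b + 1) q
        + 2 * VV d γ v f (r + 1) a b q := by
  have hA : ∀ js : Fin r → Fin d,
      ContDiff ℝ (⊤ : ℕ∞) ((vecLapX d)^[a] (dXvIter d js v)) :=
    fun js => contDiff_vecLapX_iter a (contDiff_dXvIter js hv)
  have hG : ∀ js : Fin r → Fin d,
      ContDiffOn ℝ (⊤ : ℕ∞) (dXIter d js ((dgamma d γ)^[b] f)) (UH d) :=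
    fun js => contDiffOn_dXIter js (contDiffOn_dgamma_iter γ b hf)
  have expand : dgamma d γ (VV d γ v f r a b) q
      = ∑ js : Fin r → Fin d, dgamma d γ
          (fun p => ∑ k : Fin d, (vecLapX d)^[a] (dXvIter d js v) p.1 k
            * dX d k (dXIter d js ((dgamma d γ)^[b] f)) p) q := by
    exact dgamma_sum γ Finset.univ _ (fun js _ => contDiffOn_T (hA js) (hG js)) hq
  rw [expand]
  have step : ∀ js : Fin r → Fin d, dgamma d γ
      (fun p => ∑ k : Fin d, (vecLapX d)^[a] (dXvIter d js v) p.1 k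
        * dX d k (dXIter d js ((dgamma d γ)^[b] f)) p) q
      = (∑ k : Fin d, (vecLapX d)^[a + 1] (dXvIter d js v) q.1 k
          * dX d k (dXIter d js ((dgamma d γ)^[b] f)) q)
        + (∑ k : Fin d, (vecLapX d)^[a] (dXvIter d js v) q.1 k
          * dX d k (dXIter d js ((dgamma d γ)^[b + 1] f)) q)
        + 2 * ∑ j : Fin d, ∑ k : Fin d,
            (vecLapX d)^[a] (dXvIter d (Fin.cons j js) v) q.1 k
              * dX d k (dXIter d (Fin.cons j js) ((dgamma d γ)^[b] f)) q := by
    intro js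
    rw [keyC γ (hA js) (hG js) hq]
    congr 1
    · congr 1
      -- first block : vector Laplacian iterate
      · refine Finset.sum_congr rfl fun k _ => ?_
        rw [Function.iterate_succ_apply']
      -- second block : dgamma commutes past dXIter
      · refine Finset.sum_congr rfl fun k _ => ?_
        congr 1
        rw [dX_eq, dX_eq]
        refine Dv_congr_on isOpen_UH (fun y hy => ?_) hq
        rw [dXIter_dgamma_comm γ js (contDiffOn_dgamma_iter γ b hf) y hy,
          Function.iterate_succ_apply']
    -- third block
    · congr 1
      refine Finset.sum_congr rfl fun j _ => Finset.sum_congr rfl fun k _ => ?_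
      rw [dXvIter_cons, dXIter_cons]
      rw [vecLapX_iter_dXv_comm a (contDiff_dXvIter js hv) j]
  rw [Finset.sum_congr rfl fun js _ => step js]
  simp only [Finset.sum_add_distrib]
  congr 1
  rw [← Finset.mul_sum]
  congr 1
  rw [show VV d γ v f (r + 1) a b q = ∑ js : Fin (r + 1) → Fin d, ∑ k : Fin d,
      (vecLapX d)^[a] (dXvIter d js v) q.1 k
        * dX d k (dXIter d js ((dgamma d γ)^[b] f)) q from rfl]
  rw [sum_cons r]
  rw [Finset.sum_comm]
end main

section main2
variable (γ : ℝ) {v : EuclideanSpace ℝ (Fin d) → EuclideanSpace ℝ (Fin d)}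
  (hv : ContDiff ℝ (⊤ : ℕ∞) v) {f : EuclideanSpace ℝ (Fin d) × ℝ → ℝ}
  (hf : ContDiffOn ℝ (⊤ : ℕ∞) f (UH d))

include hv hf in
lemma main_aux : ∀ (m : ℕ) (q : EuclideanSpace ℝ (Fin d) × ℝ), q ∈ UH d →
    (dgamma d γ)^[m] (fun r => ∑ k : Fin d, v r.1 k * dX d k f r) q
      = ∑ a ∈ Finset.range (m + 1), ∑ b ∈ Finset.range (m + 1 - a),
          cc m a b * (2 ^ (m - a - b) * VV d γ v f (m - a - b) a b q) := by
  intro m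
  induction m with
  | zero =>
    intro q hq
    simp only [Function.iterate_zero, id_eq]
    have h0 : VV d γ v f 0 0 0 q = ∑ k : Fin d, v q.1 k * dX d k f q := by
      unfold VV
      rw [Fintype.sum_unique]
      rfl
    simp [cc, h0]
  | succ n ih =>
    intro q hq
    rw [Function.iterate_succ_apply']
    rw [dgamma_congr_on γ (fun y hy => ih y hy) hq]
    have hInner : ∀ a b : ℕ, ContDiffOn ℝ (⊤ : ℕ∞)
        (fun p => cc n a b * (2 ^ (n - a - b) * VV d γ v f (n - a - b) a b p)) (UH d) :=
      fun a b => (contDiffOn_const.mul (contDiffOn_const.mul (contDiffOn_VV γ hv hf _ a b)))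
    have hBsum : ∀ a : ℕ, ContDiffOn ℝ (⊤ : ℕ∞)
        (fun p => ∑ b ∈ Finset.range (n + 1 - a),
          cc n a b * (2 ^ (n - a - b) * VV d γ v f (n - a - b) a b p)) (UH d) :=
      fun a => ContDiffOn.sum fun b _ => hInner a b
    rw [dgamma_sum γ (Finset.range (n + 1)) _ (fun a _ => hBsum a) hq]
    have stepA : ∀ a ∈ Finset.range (n + 1),
        dgamma d γ (fun p => ∑ b ∈ Finset.range (n + 1 - a),
          cc n a b * (2 ^ (n - a - b) * VV d γ v f (n - a - b) a b p)) q
        = ∑ b ∈ Finset.range (n + 1 - a),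
            cc n a b * (2 ^ (n - a - b) *
              (VV d γ v f (n - a - b) (a + 1) b q + VV d γ v f (n - a - b) a (b + 1) q
                + 2 * VV d γ v f (n - a - b + 1) a b q)) := by
      intro a _
      rw [dgamma_sum γ (Finset.range (n + 1 - a)) _ (fun b _ => hInner a b) hq]
      refine Finset.sum_congr rfl fun b _ => ?_
      rw [dgamma_const_mul γ (cc n a b)
        (contDiffOn_const.mul (contDiffOn_VV γ hv hf _ a b)) hq]
      rw [dgamma_const_mul γ ((2 : ℝ) ^ (n - a - b)) (contDiffOn_VV γ hv hf _ a b) hq]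
      rw [dgamma_VV γ hv hf (n - a - b) a b hq]
    rw [Finset.sum_congr rfl stepA]
    exact (comb n (fun r a b => VV d γ v f r a b q)).symm

end main2

/-- Iterated Leibniz-type formula: for smooth `v : ℝ^d → ℝ^d` and
`f ∈ C^∞(ℝ^d × (0,∞))`, pointwise on the upper half-space,
`Δ_γ^m (v·∇_x f) = ∑_{ℓ₁+ℓ₂+p=m} (m!/(ℓ₁!ℓ₂!p!)) 2^p ∑_{j₁,…,j_p}
  (Δ_x^{ℓ₁} ∂_{j₁}⋯∂_{j_p} v) · ∇_x (∂_{j₁}⋯∂_{j_p} Δ_γ^{ℓ₂} f)`. -/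
theorem stmt_11 (d : ℕ) (hd : 1 ≤ d) (γ : ℝ) (m : ℕ)
    (v : EuclideanSpace ℝ (Fin d) → EuclideanSpace ℝ (Fin d))
    (hv : ContDiff ℝ (⊤ : ℕ∞) v)
    (f : EuclideanSpace ℝ (Fin d) × ℝ → ℝ)
    (hf : ContDiffOn ℝ (⊤ : ℕ∞) f {p : EuclideanSpace ℝ (Fin d) × ℝ | 0 < p.2}) :
    ∀ q : EuclideanSpace ℝ (Fin d) × ℝ, 0 < q.2 →
      (dgamma d γ)^[m] (fun r => ∑ k : Fin d, v r.1 k * dX d k f r) q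
        = ∑ l₁ ∈ Finset.range (m + 1), ∑ l₂ ∈ Finset.range (m + 1 - l₁),
            ((m.factorial : ℝ) /
                ((l₁.factorial : ℝ) * (l₂.factorial : ℝ) *
                  ((m - l₁ - l₂).factorial : ℝ))) *
              2 ^ (m - l₁ - l₂) *
              ∑ js : Fin (m - l₁ - l₂) → Fin d, ∑ k : Fin d,
                (vecLapX d)^[l₁] (dXvIter d js v) q.1 k *
                  dX d k (dXIter d js ((dgamma d γ)^[l₂] f)) q := by
  intro q hq
  rw [main_aux γ hv hf m q hq]
  refine Finset.sum_congr rfl fun a _ => Finset.sum_congr rfl fun b _ => ?_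
  rw [show VV d γ v f (m - a - b) a b q = ∑ js : Fin (m - a - b) → Fin d, ∑ k : Fin d,
      (vecLapX d)^[a] (dXvIter d js v) q.1 k *
        dX d k (dXIter d js ((dgamma d γ)^[b] f)) q from rfl]
  rw [show cc m a b = (m.factorial : ℝ) /
      ((a.factorial : ℝ) * (b.factorial : ℝ) * ((m - a - b).factorial : ℝ)) from rfl]
  ring
end
end

section
/- Let j ∈ ℕ, let α satisfy max(0, d-2j-2) < α < d-2j, set γ = α - d + 2j + 1, and let μ ∈ C_c^∞(ℝ^d;ℝ). For every integer ℓ with 1 ≤ ℓ ≤ j, the following identity holds pointwise on ℝ^d × (0,∞): Δ_γ^ℓ 𝒦_{μ,α} = (-1)^ℓ [ ∏_{q=0}^{ℓ-1} (α + 2q)(2j - 2q) ] ⋅ 𝒦_{μ, α+2ℓ}. -/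
set_option synthInstance.maxHeartbeats 1000000
set_option maxHeartbeats 1000000


open MeasureTheory

noncomputable section

/-- The extended potential `𝒦_{μ,β}(x,ξ) = ∫ |(x-y,ξ)|^{-β} μ(y) dy` on the upper
half-space. -/
noncomputable def Kext (d : ℕ) (β : ℝ) (μ : EuclideanSpace ℝ (Fin d) → ℝ)
    (p : EuclideanSpace ℝ (Fin d) × ℝ) : ℝ :=
  ∫ y, (‖p.1 - y‖ ^ 2 + p.2 ^ 2) ^ (-β / 2) * μ y


variable {d : ℕ}

def sfun (d : ℕ) (z : EuclideanSpace ℝ (Fin d) × ℝ) : ℝ := ‖z.1‖^2 + z.2^2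

def linD (d : ℕ) (v : EuclideanSpace ℝ (Fin d) × ℝ) :
    (EuclideanSpace ℝ (Fin d) × ℝ) →L[ℝ] ℝ :=
  (∑ i, v.1 i • ((EuclideanSpace.proj i).comp
      (ContinuousLinearMap.fst ℝ (EuclideanSpace ℝ (Fin d)) ℝ)))
    + v.2 • ContinuousLinearMap.snd ℝ (EuclideanSpace ℝ (Fin d)) ℝ

lemma linD_apply (v w : EuclideanSpace ℝ (Fin d) × ℝ) :
    linD d v w = (∑ i, v.1 i * w.1 i) + v.2 * w.2 := by
  simp [linD, ContinuousLinearMap.sum_apply]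

lemma sfun_eq (z : EuclideanSpace ℝ (Fin d) × ℝ) :
    sfun d z = (∑ i, z.1 i * z.1 i) + z.2 * z.2 := by
  have h : ‖z.1‖ = Real.sqrt (∑ i, ‖z.1 i‖ ^ 2) := EuclideanSpace.norm_eq z.1
  simp only [sfun, h, Real.norm_eq_abs, sq_abs]
  rw [Real.sq_sqrt (by positivity)]
  rw [Finset.sum_congr rfl (fun i _ => sq (z.1 i))]
  ring_nf

lemma sfun_pos {z : EuclideanSpace ℝ (Fin d) × ℝ} (hz : 0 < z.2) : 0 < sfun d z := by
  have h1 : (0:ℝ) < z.2^2 := by positivity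
  have h2 : (0:ℝ) ≤ ‖z.1‖^2 := by positivity
  unfold sfun; linarith

lemma hasFDerivAt_sfun (z : EuclideanSpace ℝ (Fin d) × ℝ) :
    HasFDerivAt (sfun d) (linD d ((2:ℝ) • z)) z := by
  have h : (sfun d) = fun z : EuclideanSpace ℝ (Fin d) × ℝ =>
      (∑ i, z.1 i * z.1 i) + z.2 * z.2 := funext fun z => sfun_eq z
  rw [h]
  have h1 : ∀ i : Fin d, HasFDerivAt (fun z : EuclideanSpace ℝ (Fin d) × ℝ => z.1 i * z.1 i)
      (z.1 i • ((EuclideanSpace.proj i).comp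
        (ContinuousLinearMap.fst ℝ (EuclideanSpace ℝ (Fin d)) ℝ))
       + z.1 i • ((EuclideanSpace.proj i).comp
        (ContinuousLinearMap.fst ℝ (EuclideanSpace ℝ (Fin d)) ℝ))) z := by
    intro i
    have hl := ((EuclideanSpace.proj (𝕜 := ℝ) i).comp
      (ContinuousLinearMap.fst ℝ (EuclideanSpace ℝ (Fin d)) ℝ)).hasFDerivAt (x := z)
    exact hl.mul hl
  have h2 : HasFDerivAt (fun z : EuclideanSpace ℝ (Fin d) × ℝ => z.2 * z.2)
      (z.2 • ContinuousLinearMap.snd ℝ (EuclideanSpace ℝ (Fin d)) ℝ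
       + z.2 • ContinuousLinearMap.snd ℝ (EuclideanSpace ℝ (Fin d)) ℝ) z := by
    have hl := (ContinuousLinearMap.snd ℝ (EuclideanSpace ℝ (Fin d)) ℝ).hasFDerivAt (x := z)
    exact hl.mul hl
  have hsum := (HasFDerivAt.fun_sum (fun i (_ : i ∈ Finset.univ) => h1 i)).add h2
  refine hsum.congr_fderiv ?_
  apply ContinuousLinearMap.ext
  intro w
  simp [linD, ContinuousLinearMap.sum_apply, Finset.sum_add_distrib, two_mul, add_mul]


lemma linD_symm (a b : EuclideanSpace ℝ (Fin d) × ℝ) : linD d a b = linD d b a := by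
  simp only [linD_apply]
  rw [Finset.sum_congr rfl fun i _ => mul_comm (a.1 i) (b.1 i), mul_comm a.2 b.2]

lemma linD_swap (c : ℝ) (a b : EuclideanSpace ℝ (Fin d) × ℝ) :
    linD d (c • a) b = linD d (c • b) a := by
  simp only [linD_apply, Prod.smul_fst, Prod.smul_snd, PiLp.smul_apply, smul_eq_mul]
  rw [Finset.sum_congr rfl fun i _ => (by ring : c * a.1 i * b.1 i = c * b.1 i * a.1 i)]
  ring

/-- the kernel `z ↦ (|z.1|² + z.2²)^(-β/2)` -/
def Fk (d : ℕ) (β : ℝ) (z : EuclideanSpace ℝ (Fin d) × ℝ) : ℝ := sfun d z ^ (-β/2)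

/-- its directional derivative in direction `v`, as a function of `z` -/
def gone (d : ℕ) (β : ℝ) (v z : EuclideanSpace ℝ (Fin d) × ℝ) : ℝ :=
  (-β/2 * sfun d z ^ (-β/2 - 1)) * linD d ((2:ℝ) • v) z

lemma hasFDerivAt_Fk {β : ℝ} {z : EuclideanSpace ℝ (Fin d) × ℝ} (hz : 0 < z.2) :
    HasFDerivAt (Fk d β) ((-β/2 * sfun d z ^ (-β/2 - 1)) • linD d ((2:ℝ) • z)) z :=
  (hasFDerivAt_sfun z).rpow_const (Or.inl (sfun_pos hz).ne')

lemma fderiv_Fk {β : ℝ} {z : EuclideanSpace ℝ (Fin d) × ℝ} (hz : 0 < z.2)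
    (v : EuclideanSpace ℝ (Fin d) × ℝ) :
    fderiv ℝ (Fk d β) z v = gone d β v z := by
  rw [(hasFDerivAt_Fk hz).fderiv]
  show (-β/2 * sfun d z ^ (-β/2 - 1)) * linD d ((2:ℝ) • z) v = _
  rw [gone, linD_swap]

lemma hasFDerivAt_gone {β : ℝ} (v : EuclideanSpace ℝ (Fin d) × ℝ)
    {z : EuclideanSpace ℝ (Fin d) × ℝ} (hz : 0 < z.2) :
    HasFDerivAt (gone d β v)
      ((-β/2 * sfun d z ^ (-β/2 - 1)) • linD d ((2:ℝ) • v)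
        + (linD d ((2:ℝ) • v) z) •
            ((-β/2 * ((-β/2 - 1) * sfun d z ^ (-β/2 - 1 - 1))) • linD d ((2:ℝ) • z))) z := by
  have hA : HasFDerivAt (fun z => -β/2 * sfun d z ^ (-β/2 - 1))
      ((-β/2 * ((-β/2 - 1) * sfun d z ^ (-β/2 - 1 - 1))) • linD d ((2:ℝ) • z)) z := by
    have h := ((hasFDerivAt_sfun (d := d) z).rpow_const
      (p := -β/2 - 1) (Or.inl (sfun_pos hz).ne')).const_mul (-β/2)
    simpa [smul_smul] using h
  have hB := (linD d ((2:ℝ) • v)).hasFDerivAt (x := z)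
  have := hA.mul hB
  exact this

lemma fderiv_gone_apply {β : ℝ} (v w : EuclideanSpace ℝ (Fin d) × ℝ)
    {z : EuclideanSpace ℝ (Fin d) × ℝ} (hz : 0 < z.2) :
    fderiv ℝ (gone d β v) z w
      = (-β/2 * sfun d z ^ (-β/2 - 1)) * linD d ((2:ℝ) • v) w
        + linD d ((2:ℝ) • v) z *
            ((-β/2 * ((-β/2 - 1) * sfun d z ^ (-β/2 - 1 - 1))) * linD d ((2:ℝ) • z) w) := by
  rw [(hasFDerivAt_gone v hz).fderiv]
  simp [smul_eq_mul]

lemma contDiffAt_sfun (z : EuclideanSpace ℝ (Fin d) × ℝ) :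
    ContDiffAt ℝ (⊤ : ℕ∞) (sfun d) z := by
  have h : (sfun d) = fun z : EuclideanSpace ℝ (Fin d) × ℝ =>
      (∑ i, z.1 i * z.1 i) + z.2 * z.2 := funext fun z => sfun_eq z
  rw [h]
  apply ContDiffAt.add
  · apply ContDiffAt.sum
    intro i _
    have hc : ContDiff ℝ (⊤ : ℕ∞) (fun z : EuclideanSpace ℝ (Fin d) × ℝ => z.1 i) :=
      ((EuclideanSpace.proj (𝕜 := ℝ) i).comp
        (ContinuousLinearMap.fst ℝ (EuclideanSpace ℝ (Fin d)) ℝ)).contDiff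
    exact (hc.mul hc).contDiffAt
  · have hc : ContDiff ℝ (⊤ : ℕ∞) (fun z : EuclideanSpace ℝ (Fin d) × ℝ => z.2) :=
      (ContinuousLinearMap.snd ℝ (EuclideanSpace ℝ (Fin d)) ℝ).contDiff
    exact (hc.mul hc).contDiffAt

lemma contDiffAt_Fk {β : ℝ} {z : EuclideanSpace ℝ (Fin d) × ℝ} (hz : 0 < z.2) :
    ContDiffAt ℝ (⊤ : ℕ∞) (Fk d β) z :=
  (Real.contDiffAt_rpow_const_of_ne (sfun_pos hz).ne').comp z (contDiffAt_sfun z)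

lemma contDiffAt_gone {β : ℝ} (v : EuclideanSpace ℝ (Fin d) × ℝ)
    {z : EuclideanSpace ℝ (Fin d) × ℝ} (hz : 0 < z.2) :
    ContDiffAt ℝ (⊤ : ℕ∞) (gone d β v) z := by
  apply ContDiffAt.mul
  · exact contDiffAt_const.mul
      ((Real.contDiffAt_rpow_const_of_ne (sfun_pos hz).ne').comp z (contDiffAt_sfun z))
  · exact (linD d ((2:ℝ) • v)).contDiff.contDiffAt

/-- the smoothing operator: convolution-type integral against `μ`. -/
def Gop (d : ℕ) (μ : EuclideanSpace ℝ (Fin d) → ℝ)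
    (g : EuclideanSpace ℝ (Fin d) × ℝ → ℝ)
    (q : EuclideanSpace ℝ (Fin d) × ℝ) : ℝ :=
  ∫ y, g (q.1 - y, q.2) * μ y

lemma snd_pos_of_ball {p q : EuclideanSpace ℝ (Fin d) × ℝ} {ε : ℝ}
    (hε : ε = p.2 / 2) (hp : 0 < p.2) (hq : q ∈ Metric.closedBall p ε) : 0 < q.2 := by
  rw [Metric.mem_closedBall] at hq
  have h2 : dist q.2 p.2 ≤ dist q p := by rw [Prod.dist_eq]; exact le_max_right _ _
  have := abs_sub_lt_iff.1 (lt_of_le_of_lt (h2.trans hq) (by rw [hε]; linarith) :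
    |q.2 - p.2| < p.2)
  linarith [this.2]

lemma key_hasFDerivAt (μ : EuclideanSpace ℝ (Fin d) → ℝ)
    (hμ : Continuous μ) (hμs : HasCompactSupport μ)
    (g : EuclideanSpace ℝ (Fin d) × ℝ → ℝ)
    (hg : ∀ z : EuclideanSpace ℝ (Fin d) × ℝ, 0 < z.2 → ContDiffAt ℝ (⊤ : ℕ∞) g z)
    (p : EuclideanSpace ℝ (Fin d) × ℝ) (hp : 0 < p.2) :
    HasFDerivAt (Gop d μ g) (∫ y, μ y • fderiv ℝ g (p.1 - y, p.2)) p := by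
  set ε := p.2 / 2 with hε
  have hεpos : 0 < ε := by rw [hε]; linarith
  -- continuity of the fderiv on the upper half space
  have hcont : ContinuousOn (fderiv ℝ g) {z : EuclideanSpace ℝ (Fin d) × ℝ | 0 < z.2} :=
    fun z hz => ((hg z hz).fderiv_right (m := (⊤ : ℕ∞)) (by simp)).continuousAt.continuousWithinAt
  have hK : IsCompact (tsupport μ) := hμs
  -- the compact set of relevant arguments
  set S : Set (EuclideanSpace ℝ (Fin d) × ℝ) :=
    (fun w : (EuclideanSpace ℝ (Fin d) × ℝ) × EuclideanSpace ℝ (Fin d) =>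
      (w.1.1 - w.2, w.1.2)) '' ((Metric.closedBall p ε) ×ˢ tsupport μ) with hSdef
  have hS : IsCompact S := ((isCompact_closedBall p ε).prod hK).image
    (((continuous_fst.comp continuous_fst).sub continuous_snd).prodMk
      (continuous_snd.comp continuous_fst))
  have hSU : S ⊆ {z : EuclideanSpace ℝ (Fin d) × ℝ | 0 < z.2} := by
    rintro z ⟨⟨q, y⟩, hmem, rfl⟩
    have := snd_pos_of_ball hε hp hmem.1
    exact this
  obtain ⟨C, hC⟩ := hS.exists_bound_of_continuousOn (hcont.mono hSU)
  -- continuity of the integrand in y, for q with q.2 > 0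
  have hcy : ∀ q : EuclideanSpace ℝ (Fin d) × ℝ, 0 < q.2 →
      Continuous (fun y => g (q.1 - y, q.2) * μ y) := by
    intro q hq
    refine Continuous.mul ?_ hμ
    rw [continuous_iff_continuousAt]
    intro y
    have hf : Continuous (fun y : EuclideanSpace ℝ (Fin d) =>
        ((q.1 - y, q.2) : EuclideanSpace ℝ (Fin d) × ℝ)) :=
      (continuous_const.sub continuous_id).prodMk continuous_const
    exact ContinuousAt.comp ((hg (q.1 - y, q.2) hq).continuousAt) hf.continuousAt
  apply hasFDerivAt_integral_of_dominated_of_fderiv_le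
    (F' := fun q y => μ y • fderiv ℝ g (q.1 - y, q.2))
    (bound := fun y => C * |μ y|) (Metric.ball_mem_nhds p hεpos)
  · filter_upwards [Metric.ball_mem_nhds p hεpos] with q hq
    exact (hcy q (snd_pos_of_ball hε hp (Metric.ball_subset_closedBall hq))).aestronglyMeasurable
  · exact (hcy p hp).integrable_of_hasCompactSupport hμs.mul_left
  · refine Continuous.aestronglyMeasurable (hμ.smul (hcont.comp_continuous
      (((continuous_const.sub continuous_id).prodMk continuous_const)) (fun y => ?_)))
    exact hp
  · refine Filter.Eventually.of_forall (fun y => fun q hq => ?_)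
    rw [norm_smul (μ y) (fderiv ℝ g (q.1 - y, q.2)), Real.norm_eq_abs]
    by_cases hy : y ∈ tsupport μ
    · rw [mul_comm]
      exact mul_le_mul_of_nonneg_right
        (hC _ ⟨(q, y), ⟨Metric.ball_subset_closedBall hq, hy⟩, rfl⟩) (abs_nonneg _)
    · simp [image_eq_zero_of_notMem_tsupport hy]
  · exact (continuous_const.mul hμ.abs).integrable_of_hasCompactSupport hμs.abs.mul_left
  · refine Filter.Eventually.of_forall (fun y => fun q hq => ?_)
    have hq2 : 0 < q.2 := snd_pos_of_ball hε hp (Metric.ball_subset_closedBall hq)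
    have h1 : HasFDerivAt (fun w : EuclideanSpace ℝ (Fin d) × ℝ => w - (y, (0:ℝ)))
        (ContinuousLinearMap.id ℝ _) q := (hasFDerivAt_id q).sub_const (y, (0:ℝ))
    have hqy : q - (y, (0:ℝ)) = (q.1 - y, q.2) := by simp [Prod.ext_iff]
    have h2 : HasFDerivAt g (fderiv ℝ g (q.1 - y, q.2)) (q - (y, (0:ℝ))) := by
      rw [hqy]
      exact ((hg (q.1 - y, q.2) hq2).differentiableAt (by simp)).hasFDerivAt
    have h3 := (h2.comp q h1).mul_const (μ y)
    have heq : (fun x : EuclideanSpace ℝ (Fin d) × ℝ => g (x.1 - y, x.2) * μ y)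
        = fun x => (g ∘ fun w : EuclideanSpace ℝ (Fin d) × ℝ => w - (y, (0:ℝ))) x * μ y := by
      funext w
      simp only [Function.comp]
      rw [show w - ((y, (0:ℝ)) : EuclideanSpace ℝ (Fin d) × ℝ) = (w.1 - y, w.2) by
        simp [Prod.ext_iff]]
    rw [heq]
    simpa using h3

lemma Gop_integrable_smul (μ : EuclideanSpace ℝ (Fin d) → ℝ)
    (hμ : Continuous μ) (hμs : HasCompactSupport μ)
    (g : EuclideanSpace ℝ (Fin d) × ℝ → ℝ)
    (hg : ∀ z : EuclideanSpace ℝ (Fin d) × ℝ, 0 < z.2 → ContDiffAt ℝ (⊤ : ℕ∞) g z)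
    (p : EuclideanSpace ℝ (Fin d) × ℝ) (hp : 0 < p.2) :
    Integrable (fun y => μ y • fderiv ℝ g (p.1 - y, p.2)) := by
  have hcont : ContinuousOn (fderiv ℝ g) {z : EuclideanSpace ℝ (Fin d) × ℝ | 0 < z.2} :=
    fun z hz => ((hg z hz).fderiv_right (m := (⊤ : ℕ∞)) (by simp)).continuousAt.continuousWithinAt
  refine Continuous.integrable_of_hasCompactSupport
    (hμ.smul (hcont.comp_continuous
      ((continuous_const.sub continuous_id).prodMk continuous_const) (fun y => hp)))
    hμs.smul_right

lemma Gop_fderiv_apply (μ : EuclideanSpace ℝ (Fin d) → ℝ)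
    (hμ : Continuous μ) (hμs : HasCompactSupport μ)
    (g : EuclideanSpace ℝ (Fin d) × ℝ → ℝ)
    (hg : ∀ z : EuclideanSpace ℝ (Fin d) × ℝ, 0 < z.2 → ContDiffAt ℝ (⊤ : ℕ∞) g z)
    (p : EuclideanSpace ℝ (Fin d) × ℝ) (hp : 0 < p.2)
    (v : EuclideanSpace ℝ (Fin d) × ℝ) :
    fderiv ℝ (Gop d μ g) p v = ∫ y, fderiv ℝ g (p.1 - y, p.2) v * μ y := by
  rw [(key_hasFDerivAt μ hμ hμs g hg p hp).fderiv,
    ContinuousLinearMap.integral_apply (Gop_integrable_smul μ hμ hμs g hg p hp) v]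
  congr 1
  funext y
  simp [mul_comm]

section eval
variable {d : ℕ}

/-- the `i`-th horizontal direction -/
def uvec (d : ℕ) (i : Fin d) : EuclideanSpace ℝ (Fin d) × ℝ := (EuclideanSpace.single i 1, 0)

/-- the vertical direction -/
def vxi (d : ℕ) : EuclideanSpace ℝ (Fin d) × ℝ := (0, 1)

lemma linD_uu (i : Fin d) : linD d ((2:ℝ) • uvec d i) (uvec d i) = 2 := by
  simp [linD_apply, uvec, EuclideanSpace.single_apply, ite_mul, mul_ite, Finset.sum_ite_eq']

lemma linD_uz (i : Fin d) (z : EuclideanSpace ℝ (Fin d) × ℝ) :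
    linD d ((2:ℝ) • uvec d i) z = 2 * z.1 i := by
  simp [linD_apply, uvec, EuclideanSpace.single_apply, ite_mul, mul_ite, Finset.sum_ite_eq']

lemma linD_zu (i : Fin d) (z : EuclideanSpace ℝ (Fin d) × ℝ) :
    linD d ((2:ℝ) • z) (uvec d i) = 2 * z.1 i := by
  simp [linD_apply, uvec, EuclideanSpace.single_apply, ite_mul, mul_ite, Finset.sum_ite_eq']

lemma linD_vv : linD d ((2:ℝ) • vxi d) (vxi d) = 2 := by
  simp [linD_apply, vxi]

lemma linD_vz (z : EuclideanSpace ℝ (Fin d) × ℝ) :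
    linD d ((2:ℝ) • vxi d) z = 2 * z.2 := by
  simp [linD_apply, vxi]

lemma linD_zv (z : EuclideanSpace ℝ (Fin d) × ℝ) :
    linD d ((2:ℝ) • z) (vxi d) = 2 * z.2 := by
  simp [linD_apply, vxi]

lemma pointwise_sum (β γ : ℝ) {z : EuclideanSpace ℝ (Fin d) × ℝ} (hz : 0 < z.2) :
    (∑ i, fderiv ℝ (gone d β (uvec d i)) z (uvec d i))
      + fderiv ℝ (gone d β (vxi d)) z (vxi d)
      + γ / z.2 * gone d β (vxi d) z
    = (β * (β + 1 - d - γ)) * Fk d (β + 2) z := by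
  have hs := sfun_pos (d := d) hz
  have hz2 : z.2 ≠ 0 := hz.ne'
  have hrw : ∀ i : Fin d, fderiv ℝ (gone d β (uvec d i)) z (uvec d i)
      = (-β/2 * sfun d z ^ (-β/2 - 1)) * 2
        + 2 * z.1 i * ((-β/2 * ((-β/2 - 1) * sfun d z ^ (-β/2 - 1 - 1))) * (2 * z.1 i)) := by
    intro i
    rw [fderiv_gone_apply _ _ hz, linD_uu, linD_uz, linD_zu]
  rw [Finset.sum_congr rfl fun i _ => hrw i,
    fderiv_gone_apply _ _ hz, linD_vv, linD_vz, linD_zv, gone, linD_vz]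
  rw [Finset.sum_add_distrib, Finset.sum_const, Finset.card_univ, Fintype.card_fin]
  have hsum2 : ∑ i, 2 * z.1 i * ((-β/2 * ((-β/2 - 1) * sfun d z ^ (-β/2 - 1 - 1))) * (2 * z.1 i))
      = (-2*β*(-β/2-1) * sfun d z ^ (-β/2 - 1 - 1)) * ∑ i, z.1 i * z.1 i := by
    rw [Finset.mul_sum]
    exact Finset.sum_congr rfl fun i _ => by ring
  rw [hsum2]
  have hxx : (∑ i, z.1 i * z.1 i) = sfun d z - z.2 * z.2 := by
    rw [sfun_eq]; ring
  rw [hxx]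
  have hexp : (-(β+2)/2 : ℝ) = -β/2 - 1 := by ring
  rw [Fk, hexp]
  have hB : sfun d z ^ (-β/2 - 1 - 1) = sfun d z ^ (-β/2 - 1) / sfun d z :=
    Real.rpow_sub_one hs.ne' _
  rw [hB]
  field_simp
  ring


variable {d : ℕ}

lemma Kext_eq_Gop (β : ℝ) (μ : EuclideanSpace ℝ (Fin d) → ℝ) :
    Kext d β μ = Gop d μ (Fk d β) := rfl

lemma integrable_shift (μ : EuclideanSpace ℝ (Fin d) → ℝ)
    (hμ : Continuous μ) (hμs : HasCompactSupport μ)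
    (g : EuclideanSpace ℝ (Fin d) × ℝ → ℝ)
    (hg : ∀ z : EuclideanSpace ℝ (Fin d) × ℝ, 0 < z.2 → ContinuousAt g z)
    (p : EuclideanSpace ℝ (Fin d) × ℝ) (hp : 0 < p.2) :
    Integrable (fun y => g (p.1 - y, p.2) * μ y) := by
  refine Continuous.integrable_of_hasCompactSupport (Continuous.mul ?_ hμ) hμs.mul_left
  rw [continuous_iff_continuousAt]
  intro y
  have hf : Continuous (fun y : EuclideanSpace ℝ (Fin d) =>
      ((p.1 - y, p.2) : EuclideanSpace ℝ (Fin d) × ℝ)) :=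
    (continuous_const.sub continuous_id).prodMk continuous_const
  exact ContinuousAt.comp (hg (p.1 - y, p.2) hp) hf.continuousAt

lemma dgamma_step (μ : EuclideanSpace ℝ (Fin d) → ℝ)
    (hμ : Continuous μ) (hμs : HasCompactSupport μ) (β γ c : ℝ)
    (f : EuclideanSpace ℝ (Fin d) × ℝ → ℝ)
    (hf : ∀ q : EuclideanSpace ℝ (Fin d) × ℝ, 0 < q.2 → f q = c * Kext d β μ q)
    (p : EuclideanSpace ℝ (Fin d) × ℝ) (hp : 0 < p.2) :
    dgamma d γ f p = (c * (β * (β + 1 - (d : ℝ) - γ))) * Kext d (β + 2) μ p := by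
  have hU : IsOpen {q : EuclideanSpace ℝ (Fin d) × ℝ | 0 < q.2} :=
    isOpen_lt continuous_const continuous_snd
  have hFk : ∀ z : EuclideanSpace ℝ (Fin d) × ℝ, 0 < z.2 → ContDiffAt ℝ (⊤ : ℕ∞) (Fk d β) z :=
    fun z hz => contDiffAt_Fk hz
  -- first derivative representation
  have hd1 : ∀ (q : EuclideanSpace ℝ (Fin d) × ℝ), 0 < q.2 →
      ∀ v, fderiv ℝ f q v = c * ∫ y, gone d β v (q.1 - y, q.2) * μ y := by
    intro q hq v
    have hev : f =ᶠ[nhds q] fun q' => c * Gop d μ (Fk d β) q' := by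
      filter_upwards [hU.mem_nhds hq] with x hx
      rw [hf x hx, Kext_eq_Gop]
    rw [hev.fderiv_eq, fderiv_const_mul
      ((key_hasFDerivAt μ hμ hμs _ hFk q hq).differentiableAt) c]
    rw [ContinuousLinearMap.smul_apply, smul_eq_mul,
      Gop_fderiv_apply μ hμ hμs _ hFk q hq v]
    congr 1
    refine integral_congr_ae (Filter.Eventually.of_forall fun y => ?_)
    show (fderiv ℝ (Fk d β) (q.1 - y, q.2)) v * μ y = gone d β v (q.1 - y, q.2) * μ y
    rw [fderiv_Fk (z := (q.1 - y, q.2)) hq v]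
  -- second derivative representation
  have hd2 : ∀ v w, fderiv ℝ (fun q => fderiv ℝ f q v) p w
      = c * ∫ y, fderiv ℝ (gone d β v) (p.1 - y, p.2) w * μ y := by
    intro v w
    have hgone : ∀ z : EuclideanSpace ℝ (Fin d) × ℝ, 0 < z.2 →
        ContDiffAt ℝ (⊤ : ℕ∞) (gone d β v) z := fun z hz => contDiffAt_gone v hz
    have hev : (fun q => fderiv ℝ f q v) =ᶠ[nhds p]
        fun q => c * Gop d μ (gone d β v) q := by
      filter_upwards [hU.mem_nhds hp] with x hx
      exact hd1 x hx v
    rw [hev.fderiv_eq, fderiv_const_mul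
      ((key_hasFDerivAt μ hμ hμs _ hgone p hp).differentiableAt) c]
    rw [ContinuousLinearMap.smul_apply, smul_eq_mul,
      Gop_fderiv_apply μ hμ hμs _ hgone p hp w]
  -- integrability of the pieces
  have hint2 : ∀ v w, Integrable
      (fun y => fderiv ℝ (gone d β v) (p.1 - y, p.2) w * μ y) := by
    intro v w
    refine integrable_shift μ hμ hμs
      (fun z => fderiv ℝ (gone d β v) z w) (fun z hz => ?_) p hp
    exact (((contDiffAt_gone v hz).fderiv_right (m := (⊤ : ℕ∞)) (by simp)).clm_apply
      contDiffAt_const).continuousAt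
  have hint1 : Integrable (fun y => gone d β (vxi d) (p.1 - y, p.2) * μ y) :=
    integrable_shift μ hμ hμs _ (fun z hz => (contDiffAt_gone (vxi d) hz).continuousAt) p hp
  -- now put things together
  rw [dgamma]
  rw [Finset.sum_congr rfl (fun i (_ : i ∈ Finset.univ) =>
    hd2 (EuclideanSpace.single i 1, 0) (EuclideanSpace.single i 1, 0))]
  rw [hd2 (0, 1) (0, 1), hd1 p hp (0, 1)]
  rw [← Finset.mul_sum]
  have hsum : (∑ i : Fin d, ∫ y, fderiv ℝ (gone d β (uvec d i)) (p.1 - y, p.2) (uvec d i) * μ y)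
      = ∫ y, ∑ i : Fin d, fderiv ℝ (gone d β (uvec d i)) (p.1 - y, p.2) (uvec d i) * μ y :=
    (integral_finset_sum _ fun i _ => hint2 (uvec d i) (uvec d i)).symm
  rw [show (∑ i : Fin d, ∫ y, fderiv ℝ (gone d β (EuclideanSpace.single i 1, 0))
        (p.1 - y, p.2) (EuclideanSpace.single i 1, 0) * μ y)
      = ∑ i : Fin d, ∫ y, fderiv ℝ (gone d β (uvec d i)) (p.1 - y, p.2) (uvec d i) * μ y
    from rfl, hsum]
  rw [show (∫ y, fderiv ℝ (gone d β ((0:EuclideanSpace ℝ (Fin d)), (1:ℝ)))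
        (p.1 - y, p.2) ((0:EuclideanSpace ℝ (Fin d)), (1:ℝ)) * μ y)
      = ∫ y, fderiv ℝ (gone d β (vxi d)) (p.1 - y, p.2) (vxi d) * μ y from rfl]
  rw [show (∫ y, gone d β ((0:EuclideanSpace ℝ (Fin d)), (1:ℝ)) (p.1 - y, p.2) * μ y)
      = ∫ y, gone d β (vxi d) (p.1 - y, p.2) * μ y from rfl]
  -- combine the three integrals
  have hintsum : Integrable (fun y =>
      ∑ i : Fin d, fderiv ℝ (gone d β (uvec d i)) (p.1 - y, p.2) (uvec d i) * μ y) :=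
    integrable_finset_sum _ fun i _ => hint2 (uvec d i) (uvec d i)
  set X := ∫ y, ∑ i : Fin d, fderiv ℝ (gone d β (uvec d i)) (p.1 - y, p.2) (uvec d i) * μ y
    with hX
  set Y := ∫ y, fderiv ℝ (gone d β (vxi d)) (p.1 - y, p.2) (vxi d) * μ y with hY
  set Z := ∫ y, gone d β (vxi d) (p.1 - y, p.2) * μ y with hZ
  have comb : (∫ y, ((∑ i : Fin d, fderiv ℝ (gone d β (uvec d i)) (p.1 - y, p.2) (uvec d i) * μ y)
        + fderiv ℝ (gone d β (vxi d)) (p.1 - y, p.2) (vxi d) * μ y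
        + γ / p.2 * (gone d β (vxi d) (p.1 - y, p.2) * μ y)))
      = X + Y + γ / p.2 * Z := by
    have h1 : Integrable (fun y =>
        (∑ i : Fin d, fderiv ℝ (gone d β (uvec d i)) (p.1 - y, p.2) (uvec d i) * μ y)
          + fderiv ℝ (gone d β (vxi d)) (p.1 - y, p.2) (vxi d) * μ y) :=
      hintsum.add (hint2 (vxi d) (vxi d))
    have e2 : (∫ y, ((∑ i : Fin d, fderiv ℝ (gone d β (uvec d i)) (p.1 - y, p.2) (uvec d i) * μ y)
          + fderiv ℝ (gone d β (vxi d)) (p.1 - y, p.2) (vxi d) * μ y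
          + γ / p.2 * (gone d β (vxi d) (p.1 - y, p.2) * μ y)))
        = (∫ y, ((∑ i : Fin d, fderiv ℝ (gone d β (uvec d i)) (p.1 - y, p.2) (uvec d i) * μ y)
          + fderiv ℝ (gone d β (vxi d)) (p.1 - y, p.2) (vxi d) * μ y))
          + ∫ y, γ / p.2 * (gone d β (vxi d) (p.1 - y, p.2) * μ y) :=
      integral_add h1 (hint1.const_mul _)
    have e3 : (∫ y, ((∑ i : Fin d, fderiv ℝ (gone d β (uvec d i)) (p.1 - y, p.2) (uvec d i) * μ y)
          + fderiv ℝ (gone d β (vxi d)) (p.1 - y, p.2) (vxi d) * μ y))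
        = X + Y := integral_add hintsum (hint2 (vxi d) (vxi d))
    rw [e2, e3, integral_const_mul]
  have hptw : ∀ y : EuclideanSpace ℝ (Fin d),
      ((∑ i : Fin d, fderiv ℝ (gone d β (uvec d i)) (p.1 - y, p.2) (uvec d i) * μ y)
        + fderiv ℝ (gone d β (vxi d)) (p.1 - y, p.2) (vxi d) * μ y
        + γ / p.2 * (gone d β (vxi d) (p.1 - y, p.2) * μ y))
      = (β * (β + 1 - (d : ℝ) - γ)) * (Fk d (β + 2) (p.1 - y, p.2) * μ y) := by
    intro y
    have hps := pointwise_sum (d := d) β γ (z := (p.1 - y, p.2)) hp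
    calc ((∑ i : Fin d, fderiv ℝ (gone d β (uvec d i)) (p.1 - y, p.2) (uvec d i) * μ y)
        + fderiv ℝ (gone d β (vxi d)) (p.1 - y, p.2) (vxi d) * μ y)
        + γ / p.2 * (gone d β (vxi d) (p.1 - y, p.2) * μ y)
        = ((∑ i : Fin d, fderiv ℝ (gone d β (uvec d i)) (p.1 - y, p.2) (uvec d i))
            + fderiv ℝ (gone d β (vxi d)) (p.1 - y, p.2) (vxi d)
            + γ / p.2 * gone d β (vxi d) (p.1 - y, p.2)) * μ y := by
          rw [add_mul, add_mul, Finset.sum_mul]; ring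
      _ = (β * (β + 1 - (d : ℝ) - γ)) * (Fk d (β + 2) (p.1 - y, p.2) * μ y) := by
          rw [show (∑ i : Fin d, fderiv ℝ (gone d β (uvec d i)) (p.1 - y, p.2) (uvec d i))
              + fderiv ℝ (gone d β (vxi d)) (p.1 - y, p.2) (vxi d)
              + γ / p.2 * gone d β (vxi d) (p.1 - y, p.2)
              = (β * (β + 1 - (d : ℝ) - γ)) * Fk d (β + 2) (p.1 - y, p.2) from hps]
          ring
  have hfinal : X + Y + γ / p.2 * Z
      = (β * (β + 1 - (d : ℝ) - γ)) * Kext d (β + 2) μ p := by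
    rw [← comb, integral_congr_ae (Filter.Eventually.of_forall hptw), integral_const_mul,
      Kext_eq_Gop]
    rfl
  calc c * X + c * Y + γ / p.2 * (c * Z) = c * (X + Y + γ / p.2 * Z) := by ring
    _ = c * ((β * (β + 1 - (d : ℝ) - γ)) * Kext d (β + 2) μ p) := by rw [hfinal]
    _ = (c * (β * (β + 1 - (d : ℝ) - γ))) * Kext d (β + 2) μ p := by ring


/-- For `max(0,d-2j-2) < α < d-2j`, `γ = α-d+2j+1`, `μ ∈ C_c^∞(ℝ^d)`,
and `1 ≤ ℓ ≤ j`, pointwise on the upper half-space,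
`Δ_γ^ℓ 𝒦_{μ,α} = (-1)^ℓ [∏_{q=0}^{ℓ-1} (α+2q)(2j-2q)] 𝒦_{μ,α+2ℓ}`. -/
theorem stmt_17 (d j : ℕ) (α γ : ℝ)
    (hα₁ : max 0 ((d : ℝ) - 2 * j - 2) < α) (hα₂ : α < (d : ℝ) - 2 * j)
    (hγ : γ = α - d + 2 * j + 1)
    (μ : EuclideanSpace ℝ (Fin d) → ℝ)
    (hμ : ContDiff ℝ (⊤ : ℕ∞) μ) (hμs : HasCompactSupport μ)
    (ℓ : ℕ) (hℓ₁ : 1 ≤ ℓ) (hℓ₂ : ℓ ≤ j) :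
    ∀ p : EuclideanSpace ℝ (Fin d) × ℝ, 0 < p.2 →
      (dgamma d γ)^[ℓ] (Kext d α μ) p
        = (-1 : ℝ) ^ ℓ *
            (∏ q ∈ Finset.range ℓ, ((α + 2 * q) * (2 * (j : ℝ) - 2 * q))) *
            Kext d (α + 2 * ℓ) μ p := by
  have hμc : Continuous μ := hμ.continuous
  have main : ∀ m : ℕ, ∀ p : EuclideanSpace ℝ (Fin d) × ℝ, 0 < p.2 →
      (dgamma d γ)^[m] (Kext d α μ) p
        = (∏ q ∈ Finset.range m, ((α + 2 * q) * ((α + 2 * q) + 1 - (d : ℝ) - γ)))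
            * Kext d (α + 2 * m) μ p := by
    intro m
    induction m with
    | zero =>
      intro p hp
      simp only [Function.iterate_zero, id_eq, Finset.range_zero, Finset.prod_empty, one_mul,
        Nat.cast_zero, mul_zero, add_zero]
    | succ m ih =>
      intro p hp
      rw [Function.iterate_succ_apply']
      have happ := dgamma_step μ hμc hμs (α + 2 * m) γ
        (∏ q ∈ Finset.range m, ((α + 2 * q) * ((α + 2 * q) + 1 - (d : ℝ) - γ)))
        ((dgamma d γ)^[m] (Kext d α μ)) (fun q hq => ih q hq) p hp
      rw [happ, Finset.prod_range_succ]
      have h1 : α + 2 * ((m : ℝ) + 1) = (α + 2 * m) + 2 := by ring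
      rw [show ((m + 1 : ℕ) : ℝ) = (m : ℝ) + 1 by push_cast; ring, h1]
  intro p hp
  rw [main ℓ p hp]
  congr 1
  have hfac : ∀ q : ℕ, ((α + 2 * q) * ((α + 2 * q) + 1 - (d : ℝ) - γ))
      = (-1) * ((α + 2 * (q:ℝ)) * (2 * (j : ℝ) - 2 * q)) := by
    intro q; rw [hγ]; ring
  rw [Finset.prod_congr rfl fun q _ => hfac q, Finset.prod_mul_distrib,
    Finset.prod_const, Finset.card_range]
end eval
end
end
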